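/- Let p, q be distinct odd primes and let r be a prime with r ≡ 1 (mod pq) or r ≡ -1 (mod pq), r distinct from p and q. Then the height of Φ_{pqr} equals 1. -/

import Mathlib

open Polynomial Finset

/-- membership in the numerical semigroup generated by `p`, `q` -/
def sgood (p q : ℕ) (x : ℤ) : Prop := ∃ i j : ℕ, x = i * p + j * q

open Classical in
/-- indicator of the semigroup cut off at `p*q` -/
noncomputable def gf (p q : ℕ) (x : ℤ) : ℤ :=
  if (x < p * q ∧ sgood p q x) then 1 else 0

lemma gf_01 (p q : ℕ) (x : ℤ) : gf p q x = 0 ∨ gf p q x = 1 := by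
  unfold gf; split <;> simp

lemma sgood_nonneg {p q : ℕ} {x : ℤ} (h : sgood p q x) : 0 ≤ x := by
  obtain ⟨i, j, rfl⟩ := h; positivity

lemma gf_neg {p q : ℕ} {x : ℤ} (h : x < 0) : gf p q x = 0 := by
  unfold gf
  rw [if_neg]
  rintro ⟨-, hs⟩
  exact absurd (sgood_nonneg hs) (by omega)

lemma gf_zero {p q : ℕ} (h : 0 < p * q) : gf p q 0 = 1 := by
  unfold gf
  rw [if_pos]
  exact ⟨by exact_mod_cast h, 0, 0, by simp⟩

lemma gf_eq_one {p q : ℕ} {x : ℤ} (h1 : x < p * q) (h2 : sgood p q x) : gf p q x = 1 := by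
  unfold gf; rw [if_pos ⟨h1, h2⟩]

lemma gf_eq_one_iff {p q : ℕ} {x : ℤ} : gf p q x = 1 ↔ (x < p * q ∧ sgood p q x) := by
  unfold gf; split <;> simp_all

lemma gf_add_q {p q : ℕ} {x : ℤ} (h : gf p q x = 1) (h2 : x + q < p * q) :
    gf p q (x + q) = 1 := by
  rw [gf_eq_one_iff] at h ⊢
  obtain ⟨-, i, j, rfl⟩ := h
  exact ⟨h2, i, j + 1, by push_cast; ring⟩

lemma gf_L2 {p q : ℕ} (pp : p.Prime) (qq : q.Prime) (hpq : p ≠ q) {x : ℤ}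
    (hx : x < p * q) (h1 : gf p q (x - p) = 1) (h2 : gf p q (x - q) = 1) :
    0 ≤ x - p - q ∧ gf p q (x - p - q) = 1 := by
  rw [gf_eq_one_iff] at h1 h2
  obtain ⟨-, i, j, hij⟩ := h1
  obtain ⟨-, i', j', hij'⟩ := h2
  rcases Nat.eq_zero_or_pos j with rfl | hj
  · rcases Nat.eq_zero_or_pos i' with rfl | hi'
    · -- x = (i+1) p = (j'+1) q, contradiction with x < pq
      exfalso
      simp only [Nat.cast_zero, zero_mul, add_zero, zero_add] at hij hij'
      have hx' : x = ((i+1) * p : ℕ) := by push_cast; linarith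
      have hx'' : x = ((j'+1) * q : ℕ) := by push_cast; linarith
      have hd : ((i+1) * p : ℕ) = (j'+1) * q := by
        have := hx'.symm.trans hx''; exact_mod_cast this
      have hcop : Nat.Coprime q p := (Nat.coprime_primes qq pp).2 (Ne.symm hpq)
      have hqd : q ∣ (i+1) := by
        have : q ∣ (i+1) * p := ⟨j'+1, by linarith [hd]⟩
        exact (Nat.Coprime.dvd_of_dvd_mul_right hcop this)
      have hle : q ≤ i + 1 := Nat.le_of_dvd (by omega) hqd
      have hle2 : (q * p : ℕ) ≤ (i+1) * p := Nat.mul_le_mul_right _ hle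
      have hxge : (p * q : ℤ) ≤ x := by
        rw [hx']
        have : ((q * p : ℕ) : ℤ) ≤ ((i+1) * p : ℕ) := by exact_mod_cast hle2
        push_cast at this ⊢
        linarith
      linarith
    · -- i' ≥ 1 : x - p - q = (i'-1) p + j' q
      constructor
      · have : (0:ℤ) ≤ (i'-1 : ℕ) * p + j' * q := by positivity
        have hc : ((i' : ℤ) - 1) = ((i' - 1 : ℕ) : ℤ) := by omega
        nlinarith [this, hij', hc, pp.two_le, qq.two_le]
      · rw [gf_eq_one_iff]
        refine ⟨by omega, i' - 1, j', ?_⟩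
        have hc : ((i' - 1 : ℕ) : ℤ) = (i' : ℤ) - 1 := by omega
        rw [hc]; linarith [hij']
  · -- j ≥ 1 : x - p - q = i p + (j-1) q
    constructor
    · have : (0:ℤ) ≤ (i : ℕ) * p + (j-1 : ℕ) * q := by positivity
      have hc : ((j - 1 : ℕ) : ℤ) = (j : ℤ) - 1 := by omega
      nlinarith [this, hij, hc]
    · rw [gf_eq_one_iff]
      refine ⟨by omega, i, j - 1, ?_⟩
      have hc : ((j - 1 : ℕ) : ℤ) = (j : ℤ) - 1 := by omega
      rw [hc]; linarith [hij]

/-- cutoff indicator -/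
noncomputable def Tf (p q : ℕ) (M x : ℤ) : ℤ := gf p q (min x M)

lemma Tf_01 (p q : ℕ) (M x : ℤ) : Tf p q M x = 0 ∨ Tf p q M x = 1 := gf_01 _ _ _

/-- The central four-point bound. -/
lemma main4 {p q : ℕ} (pp : p.Prime) (qq : q.Prime) (hpq : p < q) {M x : ℤ}
    (hM : 0 ≤ M) (hx : x < p * q) :
    |Tf p q M x - Tf p q M (x - p) - Tf p q M (x - q) + Tf p q M (x - p - q)| ≤ 1 := by
  have hp2 : (2:ℤ) ≤ p := by exact_mod_cast pp.two_le
  have hq2 : (2:ℤ) ≤ q := by exact_mod_cast qq.two_le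
  have hpq' : (p:ℤ) < q := by exact_mod_cast hpq
  rw [abs_le]
  rcases le_or_gt M (x - p - q) with h5 | h5
  · -- all mins are M
    have e1 : min x M = M := min_eq_right (by omega)
    have e2 : min (x - p) M = M := min_eq_right (by omega)
    have e3 : min (x - q) M = M := min_eq_right (by omega)
    have e4 : min (x - p - q) M = M := min_eq_right h5
    unfold Tf; rw [e1, e2, e3, e4]; omega
  rcases le_or_gt M (x - q) with h4 | h4
  · have e1 : min x M = M := min_eq_right (by omega)
    have e2 : min (x - p) M = M := min_eq_right (by omega)
    have e3 : min (x - q) M = M := min_eq_right h4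
    have e4 : min (x - p - q) M = x - p - q := min_eq_left (by omega)
    unfold Tf; rw [e1, e2, e3, e4]
    rcases gf_01 p q M with h | h <;> rcases gf_01 p q (x - p - q) with h' | h' <;> omega
  rcases le_or_gt M (x - p) with h3 | h3
  · have e1 : min x M = M := min_eq_right (by omega)
    have e2 : min (x - p) M = M := min_eq_right h3
    have e3 : min (x - q) M = x - q := min_eq_left (by omega)
    have e4 : min (x - p - q) M = x - p - q := min_eq_left (by omega)
    unfold Tf; rw [e1, e2, e3, e4]
    rcases gf_01 p q (x - q) with h | h <;> rcases gf_01 p q (x - p - q) with h' | h' <;> omega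
  rcases le_or_gt M x with h2 | h2
  · -- x - p < M ≤ x
    have e1 : min x M = M := min_eq_right h2
    have e2 : min (x - p) M = x - p := min_eq_left (by omega)
    have e3 : min (x - q) M = x - q := min_eq_left (by omega)
    have e4 : min (x - p - q) M = x - p - q := min_eq_left (by omega)
    unfold Tf; rw [e1, e2, e3, e4]
    have hL1 : gf p q (x - p - q) = 1 → gf p q (x - p) = 1 := by
      intro h
      have := gf_add_q h (by omega)
      convert this using 2; ring
    have hL2 : gf p q (x - p) = 1 → gf p q (x - q) = 1 → gf p q (x - p - q) = 1 := by
      intro ha hb; exact (gf_L2 pp qq (Nat.ne_of_lt hpq) hx ha hb).2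
    rcases gf_01 p q M with h | h <;> rcases gf_01 p q (x-p) with ha | ha <;>
      rcases gf_01 p q (x-q) with hb | hb <;> rcases gf_01 p q (x-p-q) with hc | hc <;>
      simp_all <;> omega
  · -- M > x : all mins are the x-values
    have e1 : min x M = x := min_eq_left (by omega)
    have e2 : min (x - p) M = x - p := min_eq_left (by omega)
    have e3 : min (x - q) M = x - q := min_eq_left (by omega)
    have e4 : min (x - p - q) M = x - p - q := min_eq_left (by omega)
    unfold Tf; rw [e1, e2, e3, e4]
    have hL1 : gf p q (x - p - q) = 1 → gf p q (x - p) = 1 := by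
      intro h
      have := gf_add_q h (by omega)
      convert this using 2; ring
    have hL2 : gf p q (x - p) = 1 → gf p q (x - q) = 1 → gf p q (x - p - q) = 1 := by
      intro ha hb; exact (gf_L2 pp qq (Nat.ne_of_lt hpq) hx ha hb).2
    rcases gf_01 p q x with h | h <;> rcases gf_01 p q (x-p) with ha | ha <;>
      rcases gf_01 p q (x-q) with hb | hb <;> rcases gf_01 p q (x-p-q) with hc | hc <;>
      simp_all <;> omega

section PolyIdent

variable {p q r : ℕ}

lemma cyc_prime_mul (pp : p.Prime) : cyclotomic p ℤ * (X - 1) = X ^ p - 1 := by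
  haveI := Fact.mk pp
  rw [cyclotomic_prime]
  exact geom_sum_mul X p

lemma expand_X_pow_sub_one (q : ℕ) (m : ℕ) :
    expand ℤ q ((X : ℤ[X]) ^ m - 1) = X ^ (m * q) - 1 := by
  rw [map_sub, map_one, map_pow, expand_X, ← pow_mul, mul_comm q m]

lemma E1 (pp : p.Prime) (qq : q.Prime) (hpq : p ≠ q) :
    cyclotomic (p * q) ℤ * ((X ^ p - 1) * (X ^ q - 1)) = (X ^ (p * q) - 1) * (X - 1) := by
  have hqp : ¬ q ∣ p := by
    intro h
    exact hpq ((Nat.prime_dvd_prime_iff_eq qq pp).1 h).symm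
  have h2 : expand ℤ q (cyclotomic p ℤ) = cyclotomic (p * q) ℤ * cyclotomic p ℤ :=
    cyclotomic_expand_eq_cyclotomic_mul qq hqp ℤ
  have h3 : expand ℤ q (cyclotomic p ℤ * (X - 1)) = expand ℤ q ((X:ℤ[X]) ^ p - 1) := by
    rw [cyc_prime_mul pp]
  rw [map_mul, h2, expand_X_pow_sub_one] at h3
  have h4 : expand ℤ q ((X : ℤ[X]) - 1) = X ^ q - 1 := by
    have := expand_X_pow_sub_one q 1
    simpa using this
  rw [h4] at h3
  -- h3 : cyclotomic (p*q) ℤ * cyclotomic p ℤ * (X^q - 1) = X^(p*q) - 1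
  have h5 := cyc_prime_mul pp
  linear_combination ((X:ℤ[X]) - 1) * h3 - (cyclotomic (p*q) ℤ * ((X:ℤ[X])^q - 1)) * h5

noncomputable def Qp (p q : ℕ) : ℤ[X] :=
  (∑ i ∈ range q, X ^ (p * i)) * (∑ j ∈ range p, X ^ (q * j))

lemma geomA (p q : ℕ) : (∑ i ∈ range q, (X:ℤ[X]) ^ (p * i)) * (X ^ p - 1) = X ^ (p * q) - 1 := by
  have := geom_sum_mul ((X:ℤ[X]) ^ p) q
  simpa [← pow_mul] using this

lemma X_pow_sub_one_ne_zero {m : ℕ} (hm : 0 < m) : ((X:ℤ[X]) ^ m - 1) ≠ 0 := by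
  have : ((X:ℤ[X]) ^ m - 1).Monic := by
    have := monic_X_pow_sub_C (1 : ℤ) hm.ne'
    simpa using this
  exact this.ne_zero

lemma E4 (pp : p.Prime) (qq : q.Prime) (hpq : p ≠ q) :
    Qp p q * (X - 1) = cyclotomic (p * q) ℤ * (X ^ (p * q) - 1) := by
  have hp0 : 0 < p := pp.pos
  have hq0 : 0 < q := qq.pos
  apply mul_right_cancel₀ (b := (X ^ p - 1) * ((X:ℤ[X]) ^ q - 1))
    (mul_ne_zero (X_pow_sub_one_ne_zero hp0) (X_pow_sub_one_ne_zero hq0))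
  have hA := geomA p q
  have hB' : (∑ j ∈ range p, (X:ℤ[X]) ^ (q * j)) * (X ^ q - 1) = X ^ (p * q) - 1 := by
    have := geomA q p; rwa [mul_comm q p] at this
  have hE1 := E1 pp qq hpq
  unfold Qp
  linear_combination ((∑ j ∈ range p, (X:ℤ[X]) ^ (q*j)) * ((X:ℤ[X])^q - 1) * ((X:ℤ[X]) - 1)) * hA + (((X:ℤ[X])^(p*q) - 1) * ((X:ℤ[X]) - 1)) * hB' - ((X:ℤ[X])^(p*q) - 1) * hE1

end PolyIdent
section CoeffPart
variable {p q r : ℕ}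

lemma Qp_coeff (pp : p.Prime) (qq : q.Prime) (hpq : p ≠ q) (n : ℕ) (hn : (n:ℤ) < p * q) :
    (Qp p q).coeff n = gf p q n := by
  have hp0 : 0 < p := pp.pos
  have hq0 : 0 < q := qq.pos
  have hexp : (Qp p q).coeff n
      = ∑ i ∈ range q, ∑ j ∈ range p, (if n = p * i + q * j then (1:ℤ) else 0) := by
    unfold Qp
    rw [Finset.sum_mul_sum]
    rw [finset_sum_coeff]
    refine Finset.sum_congr rfl fun i _ => ?_
    rw [finset_sum_coeff]
    refine Finset.sum_congr rfl fun j _ => ?_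
    rw [← pow_add, coeff_X_pow]
  rw [hexp]
  by_cases hs : sgood p q (n:ℤ)
  · -- find the canonical representation
    obtain ⟨i0, j0, hij⟩ := hs
    have hijN : n = i0 * p + j0 * q := by exact_mod_cast hij
    have hi0 : i0 < q := by
      by_contra h
      push_neg at h
      have : q * p ≤ i0 * p := Nat.mul_le_mul_right _ h
      have : (q * p : ℕ) ≤ n := le_trans this (by omega)
      have : ((q*p : ℕ):ℤ) ≤ (n:ℤ) := by exact_mod_cast this
      push_cast at this; nlinarith
    have hj0 : j0 < p := by
      by_contra h
      push_neg at h
      have : p * q ≤ j0 * q := Nat.mul_le_mul_right _ h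
      have : (p * q : ℕ) ≤ n := le_trans this (by omega)
      have : ((p*q : ℕ):ℤ) ≤ (n:ℤ) := by exact_mod_cast this
      push_cast at this; nlinarith
    have key : ∀ i < q, ∀ j < p, (n = p * i + q * j ↔ (i = i0 ∧ j = j0)) := by
      intro i hi j hj
      constructor
      · intro h
        have hco : Nat.Coprime q p := (Nat.coprime_primes qq pp).2 (Ne.symm hpq)
        have h' : (n:ℤ) = p * i + q * j := by exact_mod_cast h
        have hz : (p:ℤ) * ((i:ℤ) - i0) = (q:ℤ) * ((j0:ℤ) - j) := by
          linear_combination hij - h'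
        have hdvd : (q:ℤ) ∣ ((i:ℤ) - i0) := by
          have h1 : (q:ℤ) ∣ (p:ℤ) * ((i:ℤ) - i0) := ⟨(j0:ℤ) - j, hz⟩
          have hcoz : IsCoprime (q:ℤ) (p:ℤ) := by
            rw [Int.isCoprime_iff_gcd_eq_one, Int.gcd_natCast_natCast]
            exact hco
          exact hcoz.dvd_of_dvd_mul_left h1
        obtain ⟨c, hc⟩ := hdvd
        have hiq : (i:ℤ) < q := by exact_mod_cast hi
        have hi0q : (i0:ℤ) < q := by exact_mod_cast hi0
        have hin : (0:ℤ) ≤ i := Int.natCast_nonneg i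
        have hi0n : (0:ℤ) ≤ i0 := Int.natCast_nonneg i0
        have hq0' : (0:ℤ) < q := by exact_mod_cast hq0
        have hc0 : c = 0 := by
          rcases le_or_gt 1 c with h1 | h1
          · have : (q:ℤ) * 1 ≤ q * c := mul_le_mul_of_nonneg_left h1 hq0'.le
            linarith
          rcases le_or_gt c (-1) with h2 | h2
          · have : (q:ℤ) * c ≤ q * (-1) := mul_le_mul_of_nonneg_left h2 hq0'.le
            linarith
          omega
        rw [hc0, mul_zero] at hc
        have hii : i = i0 := by omega
        subst hii
        refine ⟨rfl, ?_⟩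
        have hjz : (q:ℤ) * ((j0:ℤ) - j) = 0 := by linarith [hz]
        rcases mul_eq_zero.1 hjz with h'' | h'' <;> omega
      · rintro ⟨rfl, rfl⟩
        rw [hijN]; ring
    rw [Finset.sum_eq_single_of_mem i0 (mem_range.2 hi0)]
    · rw [Finset.sum_eq_single_of_mem j0 (mem_range.2 hj0)]
      · rw [if_pos (show n = p * i0 + q * j0 by rw [hijN]; ring), gf_eq_one hn ⟨i0, j0, hij⟩]
      · intro j hj hne
        rw [if_neg]
        intro h
        exact hne ((key i0 hi0 j (mem_range.1 hj)).1 h).2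
    · intro i hi hne
      apply Finset.sum_eq_zero
      intro j hj
      rw [if_neg]
      intro h
      exact hne ((key i (mem_range.1 hi) j (mem_range.1 hj)).1 h).1
  · rw [Finset.sum_eq_zero, eq_comm]
    · unfold gf
      rw [if_neg]
      rintro ⟨-, hs'⟩
      exact hs hs'
    · intro i _
      apply Finset.sum_eq_zero
      intro j hj
      rw [if_neg]
      intro h
      have hN : n = i * p + j * q := by rw [h]; ring
      exact hs ⟨i, j, by exact_mod_cast hN⟩

lemma coeff_pq_big (hpq1 : 1 < p * q) (s : ℕ) (hs : p * q ≤ s) :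
    (cyclotomic (p * q) ℤ).coeff s = 0 := by
  apply coeff_eq_zero_of_natDegree_lt
  rw [natDegree_cyclotomic]
  exact lt_of_lt_of_le (Nat.totient_lt _ hpq1) hs

lemma coeff_pq (pp : p.Prime) (qq : q.Prime) (hpq : p ≠ q) (s : ℕ) (hs : (s:ℤ) < p * q) :
    (cyclotomic (p * q) ℤ).coeff s = gf p q s - gf p q ((s:ℤ) - 1) := by
  have hE4 := E4 pp qq hpq
  have hco := congrArg (fun f => f.coeff s) hE4
  rw [mul_sub, mul_sub, mul_one, mul_one, coeff_sub, coeff_sub] at hco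
  have hsw : ¬ (p * q ≤ s) := by
    intro h
    have : ((p*q : ℕ):ℤ) ≤ s := by exact_mod_cast h
    push_cast at this; omega
  rw [coeff_mul_X_pow', if_neg hsw] at hco
  rcases Nat.eq_zero_or_pos s with rfl | hs1
  · -- s = 0
    have h1 : ((Qp p q) * X).coeff 0 = 0 := by
      rw [show ((Qp p q) * X) = ((Qp p q) * X^1) by ring, coeff_mul_X_pow']
      simp
    rw [h1, Qp_coeff pp qq hpq 0 hs] at hco
    have h3 : gf p q (((0:ℕ):ℤ) - 1) = 0 := gf_neg (by norm_num)
    rw [h3]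
    omega
  · obtain ⟨t, rfl⟩ : ∃ t, s = t + 1 := ⟨s - 1, by omega⟩
    have h1 : ((Qp p q) * X).coeff (t+1) = (Qp p q).coeff t := by
      rw [show ((Qp p q) * X) = ((Qp p q) * X^1) by ring, coeff_mul_X_pow']
      simp
    rw [h1, Qp_coeff pp qq hpq (t+1) hs, Qp_coeff pp qq hpq t (by push_cast at hs ⊢; omega)] at hco
    have harg : ((t+1:ℕ):ℤ) - 1 = (t:ℤ) := by push_cast; ring
    rw [harg]
    omega

lemma I2 (pp : p.Prime) (qq : q.Prime) (rr : r.Prime) (hpq : p ≠ q) (hrp : r ≠ p) (hrq : r ≠ q) :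
    cyclotomic (p * q * r) ℤ * (X ^ (p * q) - 1)
      = expand ℤ r (cyclotomic (p * q) ℤ) * ((∑ i ∈ range p, X ^ i) * (X ^ q - 1)) := by
  have hrdvd : ¬ r ∣ p * q := by
    intro h
    rcases (Nat.Prime.dvd_mul rr).1 h with h' | h'
    · exact hrp ((Nat.prime_dvd_prime_iff_eq rr pp).1 h')
    · exact hrq ((Nat.prime_dvd_prime_iff_eq rr qq).1 h')
  have hexp : expand ℤ r (cyclotomic (p * q) ℤ)
      = cyclotomic (p * q * r) ℤ * cyclotomic (p * q) ℤ :=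
    cyclotomic_expand_eq_cyclotomic_mul rr hrdvd ℤ
  have hE1 := E1 pp qq hpq
  have hgeom : (∑ i ∈ range p, (X:ℤ[X]) ^ i) * (X - 1) = X ^ p - 1 := geom_sum_mul X p
  apply mul_right_cancel₀ (b := (X:ℤ[X]) - 1)
    (by have : ((X:ℤ[X]) - 1).Monic := by simpa using monic_X_sub_C (1:ℤ)
        exact this.ne_zero)
  linear_combination (- ((∑ i ∈ range p, (X:ℤ[X])^i) * ((X:ℤ[X])^q - 1) * ((X:ℤ[X]) - 1))) * hexp - (cyclotomic (p*q*r) ℤ) * hE1 - (cyclotomic (p*q*r) ℤ * cyclotomic (p*q) ℤ * ((X:ℤ[X])^q - 1)) * hgeom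
end CoeffPart
section WPart
variable {p q r : ℕ} {ε : ℤ}

/-- summand function for the coefficients of `Φ_{pqr}` -/
noncomputable def Wf (p q r : ℕ) (ε : ℤ) (u : ℤ) : ℤ :=
  if 0 ≤ u ∧ (r:ℤ) * (ε * u % ((p:ℤ) * (q:ℤ))) ≤ u then
    gf p q (ε * u % ((p:ℤ) * (q:ℤ))) - gf p q (ε * u % ((p:ℤ) * (q:ℤ)) - 1) else 0

noncomputable def eaZ (p q r : ℕ) (v : ℤ) : ℤ :=
  if 0 ≤ v then (expand ℤ r (cyclotomic (p*q) ℤ)).coeff v.toNat else 0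

lemma Wf_neg {u : ℤ} (h : u < 0) : Wf p q r ε u = 0 := by
  unfold Wf
  rw [if_neg]
  rintro ⟨h1, -⟩
  omega

lemma crux (pp : p.Prime) (qq : q.Prime) (rr : r.Prime) (hpq : p ≠ q)
    (hcong : ((p:ℤ) * (q:ℤ)) ∣ ((r:ℤ) - ε)) (hε : ε = 1 ∨ ε = -1) (u : ℤ) :
    eaZ p q r u = Wf p q r ε u - Wf p q r ε (u - (p:ℤ) * (q:ℤ)) := by
  have hw : (0:ℤ) < (p:ℤ) * (q:ℤ) := by
    have h1 : (0:ℤ) < p := by exact_mod_cast pp.pos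
    have h2 : (0:ℤ) < q := by exact_mod_cast qq.pos
    positivity
  have hε2 : ε * ε = 1 := by rcases hε with rfl | rfl <;> norm_num
  rcases lt_or_ge u 0 with hu | hu
  · rw [Wf_neg hu, Wf_neg (by omega), eaZ, if_neg (by omega)]
    ring
  -- u ≥ 0
  have hmm : ε * (u - (p:ℤ) * (q:ℤ)) % ((p:ℤ) * (q:ℤ)) = ε * u % ((p:ℤ) * (q:ℤ)) := by
    have h1 : ε * (u - (p:ℤ) * (q:ℤ)) = ε * u + ((p:ℤ) * (q:ℤ)) * (-ε) := by ring
    rw [h1, Int.add_mul_emod_self_left]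
  set m : ℤ := ε * u % ((p:ℤ) * (q:ℤ)) with hmdef
  have hm0 : 0 ≤ m := Int.emod_nonneg _ (ne_of_gt hw)
  have hmw : m < (p:ℤ) * (q:ℤ) := Int.emod_lt_of_pos _ hw
  have hmt : (m.toNat : ℤ) = m := Int.toNat_of_nonneg hm0
  have hd1 : (p:ℤ) * (q:ℤ) ∣ ε * u - m := Int.dvd_self_sub_of_emod_eq rfl
  have hdvd : (p:ℤ) * (q:ℤ) ∣ (r:ℤ) * m - u := by
    have h1 : (p:ℤ) * (q:ℤ) ∣ m * ((r:ℤ) - ε) := hcong.mul_left m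
    have h2 : (p:ℤ) * (q:ℤ) ∣ ε * (ε * u - m) := hd1.mul_left ε
    have h3 := dvd_sub h1 h2
    have he : m * ((r:ℤ) - ε) - ε * (ε * u - m) = (r:ℤ) * m - u := by
      linear_combination (-u) * hε2
    rwa [he] at h3
  have hr0 : (0:ℤ) < r := by exact_mod_cast rr.pos
  by_cases hhit : (r:ℤ) * m ≤ u ∧ u - (p:ℤ) * (q:ℤ) < (r:ℤ) * m
  · -- the hit case : u = r * m
    have hu_eq : u = (r:ℤ) * m := by
      obtain ⟨c, hc⟩ := hdvd
      have hc0 : c = 0 := by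
        rcases le_or_gt 1 c with h1 | h1
        · have : (p:ℤ) * (q:ℤ) * 1 ≤ (p:ℤ) * (q:ℤ) * c := mul_le_mul_of_nonneg_left h1 hw.le
          omega
        rcases le_or_gt c (-1) with h2 | h2
        · have : (p:ℤ) * (q:ℤ) * c ≤ (p:ℤ) * (q:ℤ) * (-1) := mul_le_mul_of_nonneg_left h2 hw.le
          omega
        omega
      rw [hc0, mul_zero] at hc
      omega
    have humN : u.toNat = r * m.toNat := by
      have h1 : ((r * m.toNat : ℕ) : ℤ) = u := by push_cast; rw [hmt, ← hu_eq]
      omega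
    have hdvdN : r ∣ u.toNat := ⟨m.toNat, humN⟩
    have hquot : u.toNat / r = m.toNat := by
      rw [humN, Nat.mul_div_cancel_left _ rr.pos]
    have hLHS : eaZ p q r u = gf p q m - gf p q (m - 1) := by
      rw [eaZ, if_pos hu, coeff_expand rr.pos, if_pos hdvdN, hquot,
        coeff_pq pp qq hpq m.toNat (by rw [hmt]; exact hmw), hmt]
    rw [hLHS]
    have hW1 : Wf p q r ε u = gf p q m - gf p q (m - 1) := by
      unfold Wf
      rw [if_pos ⟨hu, by rw [← hmdef]; omega⟩, ← hmdef]
    have hW2 : Wf p q r ε (u - (p:ℤ) * (q:ℤ)) = 0 := by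
      unfold Wf
      rw [if_neg]
      rw [hmm]
      rintro ⟨-, h2⟩
      omega
    rw [hW1, hW2]
    ring
  · -- the miss case
    have hRHS : Wf p q r ε u - Wf p q r ε (u - (p:ℤ) * (q:ℤ)) = 0 := by
      by_cases hle : (r:ℤ) * m ≤ u - (p:ℤ) * (q:ℤ)
      · have hrm0 : (0:ℤ) ≤ (r:ℤ) * m := by positivity
        unfold Wf
        rw [hmm, ← hmdef]
        rw [if_pos ⟨hu, by omega⟩, if_pos ⟨by omega, by omega⟩]
        ring
      · have hle2 : ¬ ((r:ℤ) * m ≤ u) := by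
          intro h
          exact hhit ⟨h, by omega⟩
        unfold Wf
        rw [hmm, ← hmdef]
        rw [if_neg (by tauto), if_neg (by rintro ⟨-, h2⟩; omega)]
        ring
    rw [hRHS]
    -- show LHS = 0
    rw [eaZ, if_pos hu, coeff_expand rr.pos]
    split
    · next hdvdN =>
      set sN := u.toNat / r with hsN
      have husN : u = (r:ℤ) * sN := by
        obtain ⟨c, hc⟩ := hdvdN
        have hc' : sN = c := by rw [hsN, hc, Nat.mul_div_cancel_left _ rr.pos]
        subst hc'
        have h1 : ((u.toNat : ℕ) : ℤ) = ((r * sN : ℕ) : ℤ) := congrArg _ hc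
        have h2 : ((r * sN : ℕ) : ℤ) = (r:ℤ) * sN := by push_cast; ring
        omega
      have hsmod : m = (sN : ℤ) % ((p:ℤ) * (q:ℤ)) := by
        have h1 : (p:ℤ) * (q:ℤ) ∣ ε * (r:ℤ) - 1 := by
          have h2 : ε * ((r:ℤ) - ε) = ε * r - 1 := by linear_combination -hε2
          have h3 := hcong.mul_left ε
          rwa [h2] at h3
        have h3 : (p:ℤ) * (q:ℤ) ∣ ε * u - sN := by
          have h4 : ε * u - (sN:ℤ) = (ε * (r:ℤ) - 1) * sN := by
            rw [husN]; ring
          rw [h4]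
          exact h1.mul_right _
        calc m = ε * u % ((p:ℤ) * (q:ℤ)) := hmdef
        _ = (sN : ℤ) % ((p:ℤ) * (q:ℤ)) := by
            exact Int.modEq_iff_dvd.2 (by
              have h5 : (sN:ℤ) - ε * u = -(ε * u - sN) := by ring
              rw [h5]
              exact dvd_neg.2 h3)
      by_cases hsw : (sN : ℤ) < (p:ℤ) * (q:ℤ)
      · exfalso
        have he : (sN:ℤ) % ((p:ℤ) * (q:ℤ)) = sN := Int.emod_eq_of_lt (by positivity) hsw
        rw [he] at hsmod
        apply hhit
        constructor
        · rw [husN, hsmod]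
        · rw [husN, hsmod]; omega
      · apply coeff_pq_big
        · have h1 := pp.two_le; have h2 := qq.two_le; nlinarith
        · have : ((p * q : ℕ):ℤ) ≤ (sN:ℤ) := by push_cast; omega
          exact_mod_cast this
    · rfl

end WPart
section ClaimA
variable {p q r : ℕ} {ε : ℤ}

lemma claimA (pp : p.Prime) (qq : q.Prime) (rr : r.Prime) (hpq : p ≠ q)
    (hrp : r ≠ p) (hrq : r ≠ q)
    (hcong : ((p:ℤ) * (q:ℤ)) ∣ ((r:ℤ) - ε)) (hε : ε = 1 ∨ ε = -1) (n : ℕ) :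
    (cyclotomic (p*q*r) ℤ).coeff n
      = ∑ t ∈ Finset.range p, (Wf p q r ε ((n:ℤ) - t) - Wf p q r ε ((n:ℤ) - q - t)) := by
  induction n using Nat.strong_induction_on with
  | _ n IH =>
  have hpq0 : 0 < p * q := Nat.mul_pos pp.pos qq.pos
  have hI2 := I2 pp qq rr hpq hrp hrq
  have hR : expand ℤ r (cyclotomic (p*q) ℤ) * ((∑ i ∈ range p, (X:ℤ[X])^i) * (X^q - 1))
      = ∑ i ∈ range p, (expand ℤ r (cyclotomic (p*q) ℤ) * X^(q+i)
          - expand ℤ r (cyclotomic (p*q) ℤ) * X^i) := by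
    rw [Finset.sum_mul, Finset.mul_sum]
    refine Finset.sum_congr rfl fun i _ => ?_
    rw [pow_add]
    ring
  rw [hR] at hI2
  have hco := congrArg (fun f : ℤ[X] => f.coeff n) hI2
  simp only [mul_sub, mul_one, coeff_sub, finset_sum_coeff, coeff_mul_X_pow'] at hco
  -- hco : (if p*q ≤ n then c (n - p*q) else 0) - c n = ∑ i, (ite ... - ite ...)
  have hb1 : ∀ i:ℕ, (if q+i ≤ n then (expand ℤ r (cyclotomic (p*q) ℤ)).coeff (n-(q+i)) else 0)
      = eaZ p q r ((n:ℤ) - q - i) := by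
    intro i
    unfold eaZ
    by_cases h : q + i ≤ n
    · rw [if_pos h, if_pos (by push_cast; omega)]
      congr 1
      omega
    · rw [if_neg h, if_neg (by push_cast; omega)]
  have hb2 : ∀ i:ℕ, (if i ≤ n then (expand ℤ r (cyclotomic (p*q) ℤ)).coeff (n-i) else 0)
      = eaZ p q r ((n:ℤ) - i) := by
    intro i
    unfold eaZ
    by_cases h : i ≤ n
    · rw [if_pos h, if_pos (by push_cast; omega)]
      congr 1
      omega
    · rw [if_neg h, if_neg (by push_cast; omega)]
  have hS2 : ∑ i ∈ range p, ((if q+i ≤ n then (expand ℤ r (cyclotomic (p*q) ℤ)).coeff (n-(q+i)) else 0)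
        - (if i ≤ n then (expand ℤ r (cyclotomic (p*q) ℤ)).coeff (n-i) else 0))
      = ∑ t ∈ range p, (eaZ p q r ((n:ℤ) - q - t) - eaZ p q r ((n:ℤ) - t)) := by
    refine Finset.sum_congr rfl fun t _ => ?_
    rw [hb1 t, hb2 t]
  rw [hS2] at hco
  have key : ∀ t:ℕ, (Wf p q r ε ((n:ℤ) - t) - Wf p q r ε ((n:ℤ) - q - t))
      = (Wf p q r ε ((n:ℤ) - (p:ℤ)*q - t) - Wf p q r ε ((n:ℤ) - (p:ℤ)*q - q - t))
        + (eaZ p q r ((n:ℤ) - t) - eaZ p q r ((n:ℤ) - q - t)) := by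
    intro t
    have h1 := crux pp qq rr hpq hcong hε ((n:ℤ) - t)
    have h2 := crux pp qq rr hpq hcong hε ((n:ℤ) - q - t)
    have e1 : (n:ℤ) - t - (p:ℤ)*q = (n:ℤ) - (p:ℤ)*q - t := by ring
    have e2 : (n:ℤ) - q - t - (p:ℤ)*q = (n:ℤ) - (p:ℤ)*q - q - t := by ring
    rw [e1] at h1; rw [e2] at h2
    linarith
  rw [Finset.sum_congr rfl (fun t _ => key t), Finset.sum_add_distrib]
  have hS1 : ∑ t ∈ range p, (Wf p q r ε ((n:ℤ) - (p:ℤ)*q - t)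
        - Wf p q r ε ((n:ℤ) - (p:ℤ)*q - q - t))
      = (if p*q ≤ n then (cyclotomic (p*q*r) ℤ).coeff (n - p*q) else 0) := by
    split
    · next h =>
      rw [IH (n - p*q) (by omega)]
      refine Finset.sum_congr rfl fun t _ => ?_
      have e3 : ((n - p*q : ℕ) : ℤ) = (n:ℤ) - (p:ℤ)*q := by
        rw [Nat.cast_sub h]; push_cast; ring
      rw [e3]
    · next h =>
      apply Finset.sum_eq_zero
      intro t _
      have hpqn : (n:ℤ) < (p:ℤ)*q := by
        have h2 : n < p * q := lt_of_not_ge h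
        have h3 : (n:ℤ) < ((p*q:ℕ):ℤ) := by exact_mod_cast h2
        push_cast at h3
        exact h3
      rw [Wf_neg (by omega), Wf_neg (by omega)]
      ring
  rw [hS1]
  have hflip : ∑ t ∈ range p, (eaZ p q r ((n:ℤ) - t) - eaZ p q r ((n:ℤ) - q - t))
      = - ∑ t ∈ range p, (eaZ p q r ((n:ℤ) - q - t) - eaZ p q r ((n:ℤ) - t)) := by
    rw [← Finset.sum_neg_distrib]
    exact Finset.sum_congr rfl fun t _ => by ring
  rw [hflip]
  linarith [hco]

end ClaimA
section Telescope

lemma tele_desc (f : ℤ → ℤ) (x : ℤ) (l : ℕ) :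
    ∑ t ∈ Finset.range l, (f (x - t) - f (x - t - 1)) = f x - f (x - l) := by
  induction l with
  | zero => simp
  | succ l ih =>
    rw [Finset.sum_range_succ, ih]
    have e : x - (l:ℤ) - 1 = x - ((l+1 : ℕ):ℤ) := by push_cast; ring
    rw [e]
    ring

lemma tele_asc (f : ℤ → ℤ) (c : ℤ) (l : ℕ) :
    ∑ t ∈ Finset.range l, (f (c + t) - f (c + t - 1)) = f (c + l - 1) - f (c - 1) := by
  induction l with
  | zero => simp
  | succ l ih =>
    rw [Finset.sum_range_succ, ih]
    have e : c + (l:ℤ) = c + ((l+1 : ℕ):ℤ) - 1 := by push_cast; ring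
    rw [e]
    ring

lemma Tf_diff (p q : ℕ) (M m : ℤ) :
    (if m ≤ M then gf p q m - gf p q (m-1) else 0) = Tf p q M m - Tf p q M (m-1) := by
  unfold Tf
  split
  · next h => rw [min_eq_left h, min_eq_left (by omega)]
  · next h => rw [min_eq_right (by omega), min_eq_right (by omega)]; ring

end Telescope

section Guard
variable {p q r : ℕ} {k : ℤ}

lemma guard1 (hk : (r:ℤ) - 1 = k * ((p:ℤ)*(q:ℤ))) (hk1 : 1 ≤ k)
    (hw : 0 < (p:ℤ)*(q:ℤ)) (u : ℤ) :
    ((r:ℤ) * (u % ((p:ℤ)*(q:ℤ))) ≤ u) ↔ (u % ((p:ℤ)*(q:ℤ)) ≤ u / ((p:ℤ)*(q:ℤ)) / k) := by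
  have hβ := Int.mul_ediv_add_emod u ((p:ℤ)*(q:ℤ))
  have h3 : (r:ℤ) * (u % ((p:ℤ)*(q:ℤ)))
      = ((p:ℤ)*(q:ℤ)) * ((u % ((p:ℤ)*(q:ℤ))) * k) + u % ((p:ℤ)*(q:ℤ)) := by
    linear_combination (u % ((p:ℤ)*(q:ℤ))) * hk
  rw [Int.le_ediv_iff_mul_le (by omega : (0:ℤ) < k)]
  constructor
  · intro h
    have h2 : ((p:ℤ)*(q:ℤ)) * ((u % ((p:ℤ)*(q:ℤ))) * k)
        ≤ ((p:ℤ)*(q:ℤ)) * (u / ((p:ℤ)*(q:ℤ))) := by linarith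
    exact (mul_le_mul_iff_right₀ hw).1 h2
  · intro h
    have h2 : ((p:ℤ)*(q:ℤ)) * ((u % ((p:ℤ)*(q:ℤ))) * k)
        ≤ ((p:ℤ)*(q:ℤ)) * (u / ((p:ℤ)*(q:ℤ))) := (mul_le_mul_iff_right₀ hw).2 h
    linarith

lemma guard2 (hk : (r:ℤ) + 1 = k * ((p:ℤ)*(q:ℤ))) (hk1 : 1 ≤ k)
    (hw : 0 < (p:ℤ)*(q:ℤ)) (u : ℤ) (hm1 : 1 ≤ (-u) % ((p:ℤ)*(q:ℤ))) :
    ((r:ℤ) * ((-u) % ((p:ℤ)*(q:ℤ))) ≤ u)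
      ↔ ((-u) % ((p:ℤ)*(q:ℤ)) ≤ (u / ((p:ℤ)*(q:ℤ)) + 1) / k) := by
  have hm0 : 0 ≤ (-u) % ((p:ℤ)*(q:ℤ)) := Int.emod_nonneg _ (ne_of_gt hw)
  have hmw : (-u) % ((p:ℤ)*(q:ℤ)) < (p:ℤ)*(q:ℤ) := Int.emod_lt_of_pos _ hw
  have hdm : ((p:ℤ)*(q:ℤ)) ∣ (-u) - (-u) % ((p:ℤ)*(q:ℤ)) := Int.dvd_self_sub_of_emod_eq rfl
  obtain ⟨c', hc'⟩ := hdm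
  -- u + m = w * (-c')
  have hceq : u + (-u) % ((p:ℤ)*(q:ℤ)) = ((p:ℤ)*(q:ℤ)) * (-c') := by linarith [hc']
  have hdiv : u / ((p:ℤ)*(q:ℤ)) = (-c') - 1 := by
    have := (Int.ediv_emod_unique hw).2
      (⟨by linarith [hceq], by omega, by omega⟩ :
        ((p:ℤ)*(q:ℤ) - (-u) % ((p:ℤ)*(q:ℤ))) + ((p:ℤ)*(q:ℤ)) * ((-c') - 1) = u
          ∧ 0 ≤ (p:ℤ)*(q:ℤ) - (-u) % ((p:ℤ)*(q:ℤ))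
          ∧ (p:ℤ)*(q:ℤ) - (-u) % ((p:ℤ)*(q:ℤ)) < (p:ℤ)*(q:ℤ))
    exact this.1
  have h3 : (r:ℤ) * ((-u) % ((p:ℤ)*(q:ℤ)))
      = ((p:ℤ)*(q:ℤ)) * (((-u) % ((p:ℤ)*(q:ℤ))) * k) - (-u) % ((p:ℤ)*(q:ℤ)) := by
    linear_combination ((-u) % ((p:ℤ)*(q:ℤ))) * hk
  rw [Int.le_ediv_iff_mul_le (by omega : (0:ℤ) < k), hdiv]
  constructor
  · intro h
    have h2 : ((p:ℤ)*(q:ℤ)) * (((-u) % ((p:ℤ)*(q:ℤ))) * k)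
        ≤ ((p:ℤ)*(q:ℤ)) * (-c') := by linarith
    have := (mul_le_mul_iff_right₀ hw).1 h2
    linarith
  · intro h
    have h2 : ((p:ℤ)*(q:ℤ)) * (((-u) % ((p:ℤ)*(q:ℤ))) * k)
        ≤ ((p:ℤ)*(q:ℤ)) * (-c') := (mul_le_mul_iff_right₀ hw).2 (by linarith)
    linarith

end Guard

section SumW1
variable {p q r : ℕ} {k : ℤ}

lemma sumW1 (pp : p.Prime) (qq : q.Prime)
    (hk : (r:ℤ) - 1 = k * ((p:ℤ)*(q:ℤ))) (hk1 : 1 ≤ k)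
    {n : ℤ} (hn : 0 ≤ n)
    (hM : n / ((p:ℤ)*(q:ℤ)) / k ≤ ((p:ℤ)-1)*((q:ℤ)-1) - 1) :
    ∑ t ∈ Finset.range p, Wf p q r 1 (n - t)
      = Tf p q (n / ((p:ℤ)*(q:ℤ)) / k) (n % ((p:ℤ)*(q:ℤ)))
        - Tf p q (n / ((p:ℤ)*(q:ℤ)) / k) (n % ((p:ℤ)*(q:ℤ)) - p) := by
  have hp1 : (2:ℤ) ≤ p := by exact_mod_cast pp.two_le
  have hq1 : (2:ℤ) ≤ q := by exact_mod_cast qq.two_le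
  have hw : (0:ℤ) < (p:ℤ)*(q:ℤ) := by positivity
  have hpw : (p:ℤ) ≤ (p:ℤ)*(q:ℤ) := by nlinarith
  have hβeq := Int.mul_ediv_add_emod n ((p:ℤ)*(q:ℤ))
  have hν0 : 0 ≤ n % ((p:ℤ)*(q:ℤ)) := Int.emod_nonneg _ (ne_of_gt hw)
  have hνw : n % ((p:ℤ)*(q:ℤ)) < (p:ℤ)*(q:ℤ) := Int.emod_lt_of_pos _ hw
  have hβ0 : 0 ≤ n / ((p:ℤ)*(q:ℤ)) := Int.ediv_nonneg hn hw.le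
  have hβw : ((p:ℤ)*(q:ℤ)) * (n / ((p:ℤ)*(q:ℤ))) ≥ 0 := by positivity
  have hM0 : 0 ≤ n / ((p:ℤ)*(q:ℤ)) / k := Int.ediv_nonneg hβ0 (by omega)
  have hdlt : ((p:ℤ)-1)*((q:ℤ)-1) - 1 < (p:ℤ)*(q:ℤ) - (p:ℤ) + 1 := by nlinarith
  have hkey : ∀ t ∈ Finset.range p, Wf p q r 1 (n - t)
      = Tf p q (n / ((p:ℤ)*(q:ℤ)) / k) (n % ((p:ℤ)*(q:ℤ)) - t)
        - Tf p q (n / ((p:ℤ)*(q:ℤ)) / k) (n % ((p:ℤ)*(q:ℤ)) - t - 1) := by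
    intro t ht
    have htp : (t:ℤ) < p := by exact_mod_cast Finset.mem_range.1 ht
    have ht0 : (0:ℤ) ≤ t := Int.natCast_nonneg t
    rcases le_or_gt (t:ℤ) (n % ((p:ℤ)*(q:ℤ))) with hcase | hcase
    · -- no wrap
      have hu0 : 0 ≤ n - t := by omega
      have hdm : (n - t) / ((p:ℤ)*(q:ℤ)) = n / ((p:ℤ)*(q:ℤ))
          ∧ (n - t) % ((p:ℤ)*(q:ℤ)) = n % ((p:ℤ)*(q:ℤ)) - t := by
        apply (Int.ediv_emod_unique hw).2
        exact ⟨by linarith, by omega, by omega⟩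
      have hg := guard1 hk hk1 hw (n - t)
      rw [hdm.1, hdm.2] at hg
      unfold Wf
      rw [one_mul, hdm.2]
      rw [← Tf_diff]
      by_cases hle : n % ((p:ℤ)*(q:ℤ)) - t ≤ n / ((p:ℤ)*(q:ℤ)) / k
      · rw [if_pos ⟨hu0, hg.2 hle⟩, if_pos hle]
      · rw [if_neg (fun hc => hle (hg.1 hc.2)), if_neg hle]
    · -- t > ν
      have hRHS : Tf p q (n / ((p:ℤ)*(q:ℤ)) / k) (n % ((p:ℤ)*(q:ℤ)) - t)
          - Tf p q (n / ((p:ℤ)*(q:ℤ)) / k) (n % ((p:ℤ)*(q:ℤ)) - t - 1) = 0 := by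
        unfold Tf
        rw [min_eq_left (by omega), min_eq_left (by omega),
          gf_neg (by omega), gf_neg (by omega)]
        ring
      rw [hRHS]
      rcases lt_or_ge (n - t) 0 with hu | hu
      · exact Wf_neg hu
      · have hdm : (n - t) / ((p:ℤ)*(q:ℤ)) = n / ((p:ℤ)*(q:ℤ)) - 1
            ∧ (n - t) % ((p:ℤ)*(q:ℤ)) = n % ((p:ℤ)*(q:ℤ)) - t + (p:ℤ)*(q:ℤ) := by
          apply (Int.ediv_emod_unique hw).2
          exact ⟨by linarith, by omega, by omega⟩
        have hg := guard1 hk hk1 hw (n - t)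
        rw [hdm.1, hdm.2] at hg
        unfold Wf
        rw [one_mul, hdm.2]
        rw [if_neg]
        rintro ⟨-, hc⟩
        have h1 := hg.1 hc
        have h2 : (n / ((p:ℤ)*(q:ℤ)) - 1) / k ≤ n / ((p:ℤ)*(q:ℤ)) / k :=
          Int.ediv_le_ediv (by omega) (by omega)
        omega
  rw [Finset.sum_congr rfl hkey]
  exact tele_desc _ _ p

end SumW1
section SumW2
variable {p q r : ℕ} {k : ℤ}

lemma sumW2b (pp : p.Prime) (qq : q.Prime)
    (hk : (r:ℤ) + 1 = k * ((p:ℤ)*(q:ℤ))) (hk1 : 1 ≤ k)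
    {n : ℤ} (hn : 0 ≤ n) (hμ1 : 1 ≤ (-n) % ((p:ℤ)*(q:ℤ)))
    (hμp : (-n) % ((p:ℤ)*(q:ℤ)) + p ≤ (p:ℤ)*(q:ℤ)) :
    ∑ t ∈ Finset.range p, Wf p q r (-1) (n - t)
      = Tf p q ((n / ((p:ℤ)*(q:ℤ)) + 1)/k) ((-n) % ((p:ℤ)*(q:ℤ)) + p - 1)
        - Tf p q ((n / ((p:ℤ)*(q:ℤ)) + 1)/k) ((-n) % ((p:ℤ)*(q:ℤ)) - 1) := by
  have hp1 : (2:ℤ) ≤ p := by exact_mod_cast pp.two_le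
  have hq1 : (2:ℤ) ≤ q := by exact_mod_cast qq.two_le
  have hw : (0:ℤ) < (p:ℤ)*(q:ℤ) := by positivity
  have hγeq := Int.mul_ediv_add_emod (-n) ((p:ℤ)*(q:ℤ))
  have hμw : (-n) % ((p:ℤ)*(q:ℤ)) < (p:ℤ)*(q:ℤ) := Int.emod_lt_of_pos _ hw
  have hβ0 : 0 ≤ n / ((p:ℤ)*(q:ℤ)) := Int.ediv_nonneg hn hw.le
  have hβw : 0 ≤ (p:ℤ)*(q:ℤ) * (n / ((p:ℤ)*(q:ℤ))) := by positivity
  have hβeq := Int.mul_ediv_add_emod n ((p:ℤ)*(q:ℤ))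
  have hnw : n % ((p:ℤ)*(q:ℤ)) = (p:ℤ)*(q:ℤ) - (-n) % ((p:ℤ)*(q:ℤ)) := by
    have := (Int.ediv_emod_unique hw).2
      (⟨by linarith, by linarith, by linarith⟩ :
        ((p:ℤ)*(q:ℤ) - (-n) % ((p:ℤ)*(q:ℤ)))
            + ((p:ℤ)*(q:ℤ)) * (-((-n) / ((p:ℤ)*(q:ℤ))) - 1) = n
          ∧ _ ∧ _)
    exact this.2
  have hβγ : n / ((p:ℤ)*(q:ℤ)) = -((-n) / ((p:ℤ)*(q:ℤ))) - 1 := by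
    have := (Int.ediv_emod_unique hw).2
      (⟨by linarith, by linarith, by linarith⟩ :
        ((p:ℤ)*(q:ℤ) - (-n) % ((p:ℤ)*(q:ℤ)))
            + ((p:ℤ)*(q:ℤ)) * (-((-n) / ((p:ℤ)*(q:ℤ))) - 1) = n
          ∧ _ ∧ _)
    exact this.1
  have hkey : ∀ t ∈ Finset.range p, Wf p q r (-1) (n - t)
      = Tf p q ((n / ((p:ℤ)*(q:ℤ)) + 1)/k) ((-n) % ((p:ℤ)*(q:ℤ)) + t)
        - Tf p q ((n / ((p:ℤ)*(q:ℤ)) + 1)/k) ((-n) % ((p:ℤ)*(q:ℤ)) + t - 1) := by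
    intro t ht
    have htp : (t:ℤ) < p := by exact_mod_cast Finset.mem_range.1 ht
    have ht0 : (0:ℤ) ≤ t := Int.natCast_nonneg t
    have hu0 : 0 ≤ n - t := by linarith
    have hdm : (-(n - (t:ℤ))) / ((p:ℤ)*(q:ℤ)) = (-n) / ((p:ℤ)*(q:ℤ))
        ∧ (-(n - (t:ℤ))) % ((p:ℤ)*(q:ℤ)) = (-n) % ((p:ℤ)*(q:ℤ)) + t := by
      apply (Int.ediv_emod_unique hw).2
      exact ⟨by linarith, by linarith, by linarith⟩
    have hdu : (n - (t:ℤ)) / ((p:ℤ)*(q:ℤ)) = n / ((p:ℤ)*(q:ℤ)) := by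
      have := (Int.ediv_emod_unique hw).2
        (⟨by linarith, by linarith, by linarith⟩ :
          ((p:ℤ)*(q:ℤ) - (-n) % ((p:ℤ)*(q:ℤ)) - t)
              + ((p:ℤ)*(q:ℤ)) * (n / ((p:ℤ)*(q:ℤ))) = n - t
            ∧ _ ∧ _)
      exact this.1
    have hg := guard2 hk hk1 hw (n - t) (by rw [hdm.2]; linarith)
    rw [hdm.2, hdu] at hg
    unfold Wf
    rw [neg_one_mul, hdm.2, ← Tf_diff]
    by_cases hle : (-n) % ((p:ℤ)*(q:ℤ)) + t ≤ (n / ((p:ℤ)*(q:ℤ)) + 1) / k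
    · rw [if_pos ⟨hu0, hg.2 hle⟩, if_pos hle]
    · rw [if_neg (fun hc => hle (hg.1 hc.2)), if_neg hle]
  rw [Finset.sum_congr rfl hkey]
  exact tele_asc _ _ p

lemma sumW2a (pp : p.Prime) (qq : q.Prime)
    (hk : (r:ℤ) + 1 = k * ((p:ℤ)*(q:ℤ))) (hk1 : 1 ≤ k)
    {n : ℤ} (hn : 0 ≤ n) (hμ : (-n) % ((p:ℤ)*(q:ℤ)) = 0) :
    ∑ t ∈ Finset.range p, Wf p q r (-1) (n - t)
      = Tf p q ((n / ((p:ℤ)*(q:ℤ)))/k) ((p:ℤ) - 1) := by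
  have hp1 : (2:ℤ) ≤ p := by exact_mod_cast pp.two_le
  have hq1 : (2:ℤ) ≤ q := by exact_mod_cast qq.two_le
  have hw : (0:ℤ) < (p:ℤ)*(q:ℤ) := by positivity
  have hpq0 : 0 < p * q := Nat.mul_pos pp.pos qq.pos
  have hγeq := Int.mul_ediv_add_emod (-n) ((p:ℤ)*(q:ℤ))
  have hβ0 : 0 ≤ n / ((p:ℤ)*(q:ℤ)) := Int.ediv_nonneg hn hw.le
  have hpw : (p:ℤ) ≤ (p:ℤ)*(q:ℤ) := by nlinarith
  have hM0 : 0 ≤ (n / ((p:ℤ)*(q:ℤ)))/k := Int.ediv_nonneg hβ0 (by omega)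
  have hβγ : n / ((p:ℤ)*(q:ℤ)) = -((-n) / ((p:ℤ)*(q:ℤ)))
      ∧ n % ((p:ℤ)*(q:ℤ)) = 0 := by
    apply (Int.ediv_emod_unique hw).2
    exact ⟨by linarith, by omega, by omega⟩
  have hβeq := Int.mul_ediv_add_emod n ((p:ℤ)*(q:ℤ))
  have hkey : ∀ i ∈ Finset.range (p-1), Wf p q r (-1) (n - ((i+1 : ℕ):ℤ))
      = Tf p q ((n / ((p:ℤ)*(q:ℤ)))/k) (1 + (i:ℤ))
        - Tf p q ((n / ((p:ℤ)*(q:ℤ)))/k) (1 + (i:ℤ) - 1) := by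
    intro i hi
    have hip : (i:ℤ) < (p:ℤ) - 1 := by
      have := Finset.mem_range.1 hi
      have h2 : (i:ℤ) < ((p-1 : ℕ):ℤ) := by exact_mod_cast this
      omega
    have hi0 : (0:ℤ) ≤ i := Int.natCast_nonneg i
    rcases le_or_gt 1 (n / ((p:ℤ)*(q:ℤ))) with hβ1 | hβ1
    · -- β ≥ 1
      have hwβ : (p:ℤ)*(q:ℤ) * 1 ≤ (p:ℤ)*(q:ℤ) * (n / ((p:ℤ)*(q:ℤ))) :=
        mul_le_mul_of_nonneg_left hβ1 hw.le
      have hu0 : 0 ≤ n - ((i+1:ℕ):ℤ) := by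
        push_cast
        linarith [hβγ.2]
      have hdm : (-(n - ((i+1:ℕ):ℤ))) / ((p:ℤ)*(q:ℤ)) = -(n / ((p:ℤ)*(q:ℤ)))
          ∧ (-(n - ((i+1:ℕ):ℤ))) % ((p:ℤ)*(q:ℤ)) = 1 + (i:ℤ) := by
        apply (Int.ediv_emod_unique hw).2
        push_cast
        refine ⟨?_, by linarith, by linarith⟩
        linear_combination -hβeq + hβγ.2
      have hdu : (n - ((i+1:ℕ):ℤ)) / ((p:ℤ)*(q:ℤ)) = n / ((p:ℤ)*(q:ℤ)) - 1 := by
        have := (Int.ediv_emod_unique hw).2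
          (⟨by push_cast; linear_combination hβeq - hβγ.2, by linarith, by linarith⟩ :
            ((p:ℤ)*(q:ℤ) - 1 - i)
                + ((p:ℤ)*(q:ℤ)) * (n / ((p:ℤ)*(q:ℤ)) - 1) = n - ((i+1:ℕ):ℤ)
              ∧ _ ∧ _)
        exact this.1
      have hg := guard2 hk hk1 hw (n - ((i+1:ℕ):ℤ)) (by rw [hdm.2]; linarith)
      rw [hdm.2, hdu] at hg
      have he : n / ((p:ℤ)*(q:ℤ)) - 1 + 1 = n / ((p:ℤ)*(q:ℤ)) := by ring
      rw [he] at hg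
      unfold Wf
      rw [neg_one_mul, hdm.2, ← Tf_diff]
      by_cases hle : 1 + (i:ℤ) ≤ (n / ((p:ℤ)*(q:ℤ))) / k
      · rw [if_pos ⟨hu0, hg.2 hle⟩, if_pos hle]
      · rw [if_neg (fun hc => hle (hg.1 hc.2)), if_neg hle]
    · -- β = 0, so n = 0
      have hβz : n / ((p:ℤ)*(q:ℤ)) = 0 := by omega
      have hnz : n = 0 := by
        rw [hβz] at hβeq
        simp at hβeq
        omega
      have hMz : (n / ((p:ℤ)*(q:ℤ)))/k = 0 := by rw [hβz]; exact Int.zero_ediv k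
      rw [hMz, Wf_neg (by push_cast; omega)]
      unfold Tf
      rw [min_eq_right (by omega), min_eq_right (by omega)]
      ring
  have hsplit : p - 1 + 1 = p := by have := pp.two_le; omega
  have hsum := Finset.sum_range_succ' (fun t : ℕ => Wf p q r (-1) (n - t)) (p-1)
  rw [hsplit] at hsum
  rw [hsum, Finset.sum_congr rfl hkey, tele_asc]
  have hw0 : Wf p q r (-1) (n - ((0:ℕ):ℤ)) = 1 := by
    unfold Wf
    rw [neg_one_mul]
    push_cast
    rw [sub_zero, hμ]
    rw [if_pos ⟨hn, by rw [mul_zero]; exact hn⟩]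
    rw [gf_zero hpq0, gf_neg (by omega)]
    ring
  rw [hw0]
  have hT0 : Tf p q ((n / ((p:ℤ)*(q:ℤ)))/k) (1 + ((0:ℤ)) - 1) = 1 := by
    unfold Tf
    rw [show (1 + (0:ℤ) - 1) = 0 by ring, min_eq_left hM0, gf_zero hpq0]
  have harg : 1 + ((p-1 : ℕ):ℤ) - 1 = (p:ℤ) - 1 := by
    have := pp.two_le
    push_cast [Nat.cast_sub (by omega : 1 ≤ p)]
    ring
  rw [harg] at *
  rw [show (1:ℤ) - 1 = 1 + (0:ℤ) - 1 by ring, hT0]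
  ring

end SumW2
section SumW2c
variable {p q r : ℕ} {k : ℤ}

lemma sumW2c (pp : p.Prime) (qq : q.Prime)
    (hk : (r:ℤ) + 1 = k * ((p:ℤ)*(q:ℤ))) (hk1 : 1 ≤ k)
    {n : ℤ} (hn : 0 ≤ n) (hμ1 : 1 ≤ (-n) % ((p:ℤ)*(q:ℤ)))
    (hμp : (p:ℤ)*(q:ℤ) < (-n) % ((p:ℤ)*(q:ℤ)) + p)
    (hM : (n / ((p:ℤ)*(q:ℤ)) + 1)/k ≤ ((p:ℤ)-1)*((q:ℤ)-1) - 1) :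
    ∑ t ∈ Finset.range p, Wf p q r (-1) (n - t)
      = Tf p q ((n / ((p:ℤ)*(q:ℤ)))/k)
          ((-n) % ((p:ℤ)*(q:ℤ)) + p - 1 - (p:ℤ)*(q:ℤ)) := by
  have hp1 : (2:ℤ) ≤ p := by exact_mod_cast pp.two_le
  have hq1 : (2:ℤ) ≤ q := by exact_mod_cast qq.two_le
  have hw : (0:ℤ) < (p:ℤ)*(q:ℤ) := by positivity
  have hpq0 : 0 < p * q := Nat.mul_pos pp.pos qq.pos
  have hpw : (p:ℤ) ≤ (p:ℤ)*(q:ℤ) := by nlinarith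
  have hγeq := Int.mul_ediv_add_emod (-n) ((p:ℤ)*(q:ℤ))
  have hμw : (-n) % ((p:ℤ)*(q:ℤ)) < (p:ℤ)*(q:ℤ) := Int.emod_lt_of_pos _ hw
  have hβ0 : 0 ≤ n / ((p:ℤ)*(q:ℤ)) := Int.ediv_nonneg hn hw.le
  have hβw : 0 ≤ (p:ℤ)*(q:ℤ) * (n / ((p:ℤ)*(q:ℤ))) := by positivity
  have hβeq := Int.mul_ediv_add_emod n ((p:ℤ)*(q:ℤ))
  have hM20 : 0 ≤ (n / ((p:ℤ)*(q:ℤ)))/k := Int.ediv_nonneg hβ0 (by omega)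
  have hM2M : (n / ((p:ℤ)*(q:ℤ)))/k ≤ (n / ((p:ℤ)*(q:ℤ)) + 1)/k :=
    Int.ediv_le_ediv (by omega) (by omega)
  have hdlt : ((p:ℤ)-1)*((q:ℤ)-1) - 1 < (p:ℤ)*(q:ℤ) - (p:ℤ) + 1 := by nlinarith
  have hnw : n % ((p:ℤ)*(q:ℤ)) = (p:ℤ)*(q:ℤ) - (-n) % ((p:ℤ)*(q:ℤ)) := by
    have := (Int.ediv_emod_unique hw).2
      (⟨by linarith, by linarith, by linarith⟩ :
        ((p:ℤ)*(q:ℤ) - (-n) % ((p:ℤ)*(q:ℤ)))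
            + ((p:ℤ)*(q:ℤ)) * (-((-n) / ((p:ℤ)*(q:ℤ))) - 1) = n
          ∧ _ ∧ _)
    exact this.2
  have hcast : ((p*q : ℕ):ℤ) = (p:ℤ)*(q:ℤ) := by push_cast; ring
  have hμt : (((-n) % ((p:ℤ)*(q:ℤ))).toNat : ℤ) = (-n) % ((p:ℤ)*(q:ℤ)) :=
    Int.toNat_of_nonneg (by omega)
  set t₀N : ℕ := p*q - ((-n) % ((p:ℤ)*(q:ℤ))).toNat with ht₀def
  have ht₀ : (t₀N:ℤ) = (p:ℤ)*(q:ℤ) - (-n) % ((p:ℤ)*(q:ℤ)) := by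
    rw [ht₀def]
    omega
  have ht₀1 : 1 ≤ t₀N := by omega
  have ht₀p : t₀N < p := by
    have : (t₀N:ℤ) < p := by omega
    exact_mod_cast this
  -- split the sum
  rw [Finset.range_eq_Ico, ← Finset.sum_Ico_consecutive _ (Nat.zero_le t₀N) ht₀p.le,
    Finset.sum_eq_sum_Ico_succ_bot ht₀p]
  have h₁ : ∑ t ∈ Finset.Ico 0 t₀N, Wf p q r (-1) (n - t) = 0 := by
    apply Finset.sum_eq_zero
    intro t ht
    have htt : (t:ℤ) < t₀N := by exact_mod_cast (Finset.mem_Ico.1 ht).2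
    have ht0 : (0:ℤ) ≤ t := Int.natCast_nonneg t
    have hu0 : 0 ≤ n - t := by linarith
    have hdm : (-(n - (t:ℤ))) / ((p:ℤ)*(q:ℤ)) = (-n) / ((p:ℤ)*(q:ℤ))
        ∧ (-(n - (t:ℤ))) % ((p:ℤ)*(q:ℤ)) = (-n) % ((p:ℤ)*(q:ℤ)) + t := by
      apply (Int.ediv_emod_unique hw).2
      exact ⟨by linarith, by linarith, by linarith⟩
    have hg := guard2 hk hk1 hw (n - t) (by rw [hdm.2]; linarith)
    have hdu : (n - (t:ℤ)) / ((p:ℤ)*(q:ℤ)) = n / ((p:ℤ)*(q:ℤ)) := by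
      have := (Int.ediv_emod_unique hw).2
        (⟨by linarith, by linarith, by linarith⟩ :
          ((p:ℤ)*(q:ℤ) - (-n) % ((p:ℤ)*(q:ℤ)) - t)
              + ((p:ℤ)*(q:ℤ)) * (n / ((p:ℤ)*(q:ℤ))) = n - t
            ∧ _ ∧ _)
      exact this.1
    rw [hdm.2, hdu] at hg
    unfold Wf
    rw [neg_one_mul, hdm.2, if_neg]
    rintro ⟨-, hc⟩
    have h1 := hg.1 hc
    linarith
  have h₂ : Wf p q r (-1) (n - (t₀N:ℤ)) = 1 := by
    have he : -(n - (t₀N:ℤ)) = ((p:ℤ)*(q:ℤ)) * (-(n / ((p:ℤ)*(q:ℤ)))) := by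
      linear_combination ht₀ - hnw + hβeq
    unfold Wf
    rw [neg_one_mul, he, Int.mul_emod_right]
    rw [if_pos ⟨by linarith, by rw [mul_zero]; linarith⟩]
    rw [gf_zero hpq0, gf_neg (by omega)]
    ring
  have h₃ : ∑ t ∈ Finset.Ico (t₀N+1) p, Wf p q r (-1) (n - t)
      = Tf p q ((n / ((p:ℤ)*(q:ℤ)))/k)
          ((-n) % ((p:ℤ)*(q:ℤ)) + p - 1 - (p:ℤ)*(q:ℤ)) - 1 := by
    rw [Finset.sum_Ico_eq_sum_range]
    have hkey : ∀ i ∈ Finset.range (p - (t₀N+1)), Wf p q r (-1) (n - ((t₀N+1+i : ℕ):ℤ))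
        = Tf p q ((n / ((p:ℤ)*(q:ℤ)))/k) (1 + (i:ℤ))
          - Tf p q ((n / ((p:ℤ)*(q:ℤ)))/k) (1 + (i:ℤ) - 1) := by
      intro i hi
      have hip : (i:ℤ) < (p:ℤ) - t₀N - 1 := by
        have h1 := Finset.mem_range.1 hi
        have h2 : (i:ℤ) < ((p - (t₀N+1) : ℕ):ℤ) := by exact_mod_cast h1
        omega
      have hi0 : (0:ℤ) ≤ i := Int.natCast_nonneg i
      rcases le_or_gt 1 (n / ((p:ℤ)*(q:ℤ))) with hβ1 | hβ1
      · have hwβ : (p:ℤ)*(q:ℤ) * 1 ≤ (p:ℤ)*(q:ℤ) * (n / ((p:ℤ)*(q:ℤ))) :=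
          mul_le_mul_of_nonneg_left hβ1 hw.le
        have hu0 : 0 ≤ n - ((t₀N+1+i:ℕ):ℤ) := by
          push_cast
          linarith
        have hdm : (-(n - ((t₀N+1+i:ℕ):ℤ))) / ((p:ℤ)*(q:ℤ)) = -(n / ((p:ℤ)*(q:ℤ)))
            ∧ (-(n - ((t₀N+1+i:ℕ):ℤ))) % ((p:ℤ)*(q:ℤ)) = 1 + (i:ℤ) := by
          apply (Int.ediv_emod_unique hw).2
          push_cast
          refine ⟨?_, by linarith, by linarith⟩
          linear_combination -hβeq - ht₀ + hnw
        have hdu : (n - ((t₀N+1+i:ℕ):ℤ)) / ((p:ℤ)*(q:ℤ)) = n / ((p:ℤ)*(q:ℤ)) - 1 := by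
          have := (Int.ediv_emod_unique hw).2
            (⟨by push_cast; linear_combination hβeq + ht₀ - hnw, by linarith, by linarith⟩ :
              ((p:ℤ)*(q:ℤ) - 1 - i)
                  + ((p:ℤ)*(q:ℤ)) * (n / ((p:ℤ)*(q:ℤ)) - 1) = n - ((t₀N+1+i:ℕ):ℤ)
                ∧ _ ∧ _)
          exact this.1
        have hg := guard2 hk hk1 hw (n - ((t₀N+1+i:ℕ):ℤ)) (by rw [hdm.2]; linarith)
        rw [hdm.2, hdu] at hg
        have he2 : n / ((p:ℤ)*(q:ℤ)) - 1 + 1 = n / ((p:ℤ)*(q:ℤ)) := by ring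
        rw [he2] at hg
        unfold Wf
        rw [neg_one_mul, hdm.2, ← Tf_diff]
        by_cases hle : 1 + (i:ℤ) ≤ (n / ((p:ℤ)*(q:ℤ))) / k
        · rw [if_pos ⟨hu0, hg.2 hle⟩, if_pos hle]
        · rw [if_neg (fun hc => hle (hg.1 hc.2)), if_neg hle]
      · have hβz : n / ((p:ℤ)*(q:ℤ)) = 0 := by omega
        have hnz : n = (p:ℤ)*(q:ℤ) - (-n) % ((p:ℤ)*(q:ℤ)) := by
          rw [hβz] at hβeq
          simp at hβeq
          omega
        have hMz : (n / ((p:ℤ)*(q:ℤ)))/k = 0 := by rw [hβz]; exact Int.zero_ediv k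
        rw [hMz, Wf_neg (by push_cast; omega)]
        unfold Tf
        rw [min_eq_right (by omega), min_eq_right (by omega)]
        ring
    rw [Finset.sum_congr rfl hkey, tele_asc]
    have hT0 : Tf p q ((n / ((p:ℤ)*(q:ℤ)))/k) (1 - 1) = 1 := by
      unfold Tf
      rw [show ((1:ℤ) - 1) = 0 by ring, min_eq_left hM20, gf_zero hpq0]
    have harg : 1 + ((p - (t₀N+1) : ℕ):ℤ) - 1
        = (-n) % ((p:ℤ)*(q:ℤ)) + p - 1 - (p:ℤ)*(q:ℤ) := by
      have h1 : ((p - (t₀N+1) : ℕ):ℤ) = (p:ℤ) - t₀N - 1 := by omega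
      omega
    rw [harg, hT0]
  rw [h₁, h₂, h₃]
  ring

end SumW2c
section Bounds
variable {p q r : ℕ} {k : ℤ}

lemma div_bound {a b c : ℤ} (hb : 0 < b) (h : a ≤ c * b - 1) : a / b ≤ c - 1 := by
  have h1 : (c * b - 1) / b = c - 1 := by
    have := (Int.ediv_emod_unique hb).2
      (⟨by ring, by omega, by omega⟩ :
        (b - 1) + b * (c - 1) = c * b - 1 ∧ 0 ≤ b - 1 ∧ b - 1 < b)
    exact this.1
  calc a / b ≤ (c * b - 1) / b := Int.ediv_le_ediv hb h
  _ = c - 1 := h1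

/-- cutoff bound for ε = 1 -/
lemma Mbound1 (pp : p.Prime) (qq : q.Prime)
    (hk : (r:ℤ) - 1 = k * ((p:ℤ)*(q:ℤ))) (hk1 : 1 ≤ k) {n : ℤ}
    (hD : n ≤ ((p:ℤ)-1)*((q:ℤ)-1)*((r:ℤ)-1) - 1) :
    n / ((p:ℤ)*(q:ℤ)) / k ≤ ((p:ℤ)-1)*((q:ℤ)-1) - 1 := by
  have hp1 : (2:ℤ) ≤ p := by exact_mod_cast pp.two_le
  have hq1 : (2:ℤ) ≤ q := by exact_mod_cast qq.two_le
  have hw : (0:ℤ) < (p:ℤ)*(q:ℤ) := by positivity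
  have h1 : n ≤ (((p:ℤ)-1)*((q:ℤ)-1)*k) * ((p:ℤ)*(q:ℤ)) - 1 := by
    calc n ≤ ((p:ℤ)-1)*((q:ℤ)-1)*((r:ℤ)-1) - 1 := hD
    _ = (((p:ℤ)-1)*((q:ℤ)-1)*k) * ((p:ℤ)*(q:ℤ)) - 1 := by rw [hk]; ring
  have h2 : n / ((p:ℤ)*(q:ℤ)) ≤ ((p:ℤ)-1)*((q:ℤ)-1)*k - 1 := div_bound hw h1
  exact div_bound (by omega) (by linarith)

/-- cutoff bound for ε = -1; note `p,q` odd is needed here -/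
lemma Mbound2 (pp : p.Prime) (qq : q.Prime) (hp3 : (3:ℤ) ≤ p) (hq3 : (4:ℤ) ≤ q)
    (hk : (r:ℤ) + 1 = k * ((p:ℤ)*(q:ℤ))) (hk1 : 1 ≤ k) {n : ℤ}
    (hD : n ≤ ((p:ℤ)-1)*((q:ℤ)-1)*((r:ℤ)-1) - 1) :
    (n / ((p:ℤ)*(q:ℤ)) + 1) / k ≤ ((p:ℤ)-1)*((q:ℤ)-1) - 1 := by
  have hw : (0:ℤ) < (p:ℤ)*(q:ℤ) := by positivity
  have h2d : (p:ℤ)*(q:ℤ) ≤ 2*(((p:ℤ)-1)*((q:ℤ)-1)) := by nlinarith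
  have h1 : n ≤ (((p:ℤ)-1)*((q:ℤ)-1)*k - 1) * ((p:ℤ)*(q:ℤ)) - 1 := by
    have : ((p:ℤ)-1)*((q:ℤ)-1)*((r:ℤ)-1)
        = ((p:ℤ)-1)*((q:ℤ)-1)*k * ((p:ℤ)*(q:ℤ)) - 2*(((p:ℤ)-1)*((q:ℤ)-1)) := by
      rw [show (r:ℤ) - 1 = k * ((p:ℤ)*(q:ℤ)) - 2 by omega]
      ring
    nlinarith [hD]
  have h2 : n / ((p:ℤ)*(q:ℤ)) ≤ ((p:ℤ)-1)*((q:ℤ)-1)*k - 1 - 1 :=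
    div_bound hw (by linarith)
  exact div_bound (by omega) (by linarith)

lemma abs_le_one_of_Tf {x A B : ℤ}
    (hA : A = 0 ∨ A = 1) (hB : B = 0 ∨ B = 1) (hx : x = A - B) : |x| ≤ 1 := by
  rw [abs_le]; omega

/-- generic bound for a single W-sum, ε = -1 -/
lemma sumW2_bound (pp : p.Prime) (qq : q.Prime)
    (hk : (r:ℤ) + 1 = k * ((p:ℤ)*(q:ℤ))) (hk1 : 1 ≤ k)
    {n : ℤ} (hn : 0 ≤ n)
    (hM : (n / ((p:ℤ)*(q:ℤ)) + 1)/k ≤ ((p:ℤ)-1)*((q:ℤ)-1) - 1) :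
    |∑ t ∈ Finset.range p, Wf p q r (-1) (n - t)| ≤ 1 := by
  have hw : (0:ℤ) < (p:ℤ)*(q:ℤ) := by
    have h1 : (2:ℤ) ≤ p := by exact_mod_cast pp.two_le
    have h2 : (2:ℤ) ≤ q := by exact_mod_cast qq.two_le
    positivity
  have hμ0 : 0 ≤ (-n) % ((p:ℤ)*(q:ℤ)) := Int.emod_nonneg _ (ne_of_gt hw)
  rcases eq_or_lt_of_le hμ0 with hμz | hμ1
  · rw [sumW2a pp qq hk hk1 hn hμz.symm]
    rcases Tf_01 p q ((n / ((p:ℤ)*(q:ℤ)))/k) ((p:ℤ) - 1) with h | h <;> rw [h] <;> norm_num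
  · rcases le_or_gt ((-n) % ((p:ℤ)*(q:ℤ)) + p) ((p:ℤ)*(q:ℤ)) with hc | hc
    · rw [sumW2b pp qq hk hk1 hn (by omega) hc]
      exact abs_le_one_of_Tf (Tf_01 _ _ _ _) (Tf_01 _ _ _ _) rfl
    · rw [sumW2c pp qq hk hk1 hn (by omega) hc hM]
      rcases Tf_01 p q ((n / ((p:ℤ)*(q:ℤ)))/k)
        ((-n) % ((p:ℤ)*(q:ℤ)) + p - 1 - (p:ℤ)*(q:ℤ)) with h | h <;> rw [h] <;> norm_num

/-- the main bound, ε = 1 -/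
lemma bound1 (pp : p.Prime) (qq : q.Prime) (hplt : p < q)
    (hk : (r:ℤ) - 1 = k * ((p:ℤ)*(q:ℤ))) (hk1 : 1 ≤ k)
    {n : ℤ} (hn : 0 ≤ n) (hD : n ≤ ((p:ℤ)-1)*((q:ℤ)-1)*((r:ℤ)-1) - 1) :
    |∑ t ∈ Finset.range p, (Wf p q r 1 (n - t) - Wf p q r 1 (n - q - t))| ≤ 1 := by
  have hp1 : (2:ℤ) ≤ p := by exact_mod_cast pp.two_le
  have hq1 : (2:ℤ) ≤ q := by exact_mod_cast qq.two_le
  have hpq' : (p:ℤ) < q := by exact_mod_cast hplt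
  have hw : (0:ℤ) < (p:ℤ)*(q:ℤ) := by positivity
  have hM := Mbound1 pp qq hk hk1 hD
  have hM0 : 0 ≤ n / ((p:ℤ)*(q:ℤ)) / k :=
    Int.ediv_nonneg (Int.ediv_nonneg hn hw.le) (by omega)
  have hν0 : 0 ≤ n % ((p:ℤ)*(q:ℤ)) := Int.emod_nonneg _ (ne_of_gt hw)
  have hνw : n % ((p:ℤ)*(q:ℤ)) < (p:ℤ)*(q:ℤ) := Int.emod_lt_of_pos _ hw
  have hβ0 : 0 ≤ n / ((p:ℤ)*(q:ℤ)) := Int.ediv_nonneg hn hw.le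
  have hβeq := Int.mul_ediv_add_emod n ((p:ℤ)*(q:ℤ))
  have hd : ((p:ℤ)-1)*((q:ℤ)-1) = (p:ℤ)*(q:ℤ) - p - q + 1 := by ring
  rw [Finset.sum_sub_distrib]
  rw [sumW1 pp qq hk hk1 hn hM]
  rcases lt_or_ge n (q:ℤ) with hnq | hnq
  · -- n < q : second sum vanishes
    have hz : ∑ t ∈ Finset.range p, Wf p q r 1 (n - q - t) = 0 :=
      Finset.sum_eq_zero fun t _ => Wf_neg (by
        have := Int.natCast_nonneg t; omega)
    rw [hz]
    have h1 := Tf_01 p q (n / ((p:ℤ)*(q:ℤ)) / k) (n % ((p:ℤ)*(q:ℤ)))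
    have h2 := Tf_01 p q (n / ((p:ℤ)*(q:ℤ)) / k) (n % ((p:ℤ)*(q:ℤ)) - p)
    rw [abs_le]
    omega
  · have hn' : 0 ≤ n - q := by omega
    have hM' : (n - q) / ((p:ℤ)*(q:ℤ)) / k ≤ ((p:ℤ)-1)*((q:ℤ)-1) - 1 :=
      Mbound1 pp qq hk hk1 (by omega)
    rw [sumW1 pp qq hk hk1 hn' hM']
    rcases le_or_gt (q:ℤ) (n % ((p:ℤ)*(q:ℤ))) with hν | hν
    · -- ν ≥ q : same cutoff, 4-point bound
      have hdm : (n - q) / ((p:ℤ)*(q:ℤ)) = n / ((p:ℤ)*(q:ℤ))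
          ∧ (n - q) % ((p:ℤ)*(q:ℤ)) = n % ((p:ℤ)*(q:ℤ)) - q := by
        apply (Int.ediv_emod_unique hw).2
        exact ⟨by linarith, by linarith, by linarith⟩
      rw [hdm.1, hdm.2]
      have h4 := main4 pp qq hplt hM0 hνw
      have e1 : n % ((p:ℤ)*(q:ℤ)) - q - p = n % ((p:ℤ)*(q:ℤ)) - p - q := by ring
      rw [e1]
      rw [abs_le] at h4 ⊢
      constructor <;> linarith [h4.1, h4.2]
    · -- ν < q : second sum is 0
      have hβ1 : 1 ≤ n / ((p:ℤ)*(q:ℤ)) := by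
        by_contra hcon
        push_neg at hcon
        have : n / ((p:ℤ)*(q:ℤ)) = 0 := by
          omega
        rw [this] at hβeq
        simp at hβeq
        omega
      have hdm : (n - q) / ((p:ℤ)*(q:ℤ)) = n / ((p:ℤ)*(q:ℤ)) - 1
          ∧ (n - q) % ((p:ℤ)*(q:ℤ)) = n % ((p:ℤ)*(q:ℤ)) - q + (p:ℤ)*(q:ℤ) := by
        apply (Int.ediv_emod_unique hw).2
        exact ⟨by linarith, by linarith, by linarith⟩
      rw [hdm.1, hdm.2]
      have hMle : (n / ((p:ℤ)*(q:ℤ)) - 1) / k ≤ n / ((p:ℤ)*(q:ℤ)) / k :=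
        Int.ediv_le_ediv (by omega) (by omega)
      have hSB : Tf p q ((n / ((p:ℤ)*(q:ℤ)) - 1) / k)
            (n % ((p:ℤ)*(q:ℤ)) - q + (p:ℤ)*(q:ℤ))
          - Tf p q ((n / ((p:ℤ)*(q:ℤ)) - 1) / k)
            (n % ((p:ℤ)*(q:ℤ)) - q + (p:ℤ)*(q:ℤ) - p) = 0 := by
        unfold Tf
        rw [min_eq_right (by linarith), min_eq_right (by linarith)]
        ring
      rw [hSB, sub_zero]
      have h1 := Tf_01 p q (n / ((p:ℤ)*(q:ℤ)) / k) (n % ((p:ℤ)*(q:ℤ)))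
      have h2 := Tf_01 p q (n / ((p:ℤ)*(q:ℤ)) / k) (n % ((p:ℤ)*(q:ℤ)) - p)
      rw [abs_le]
      omega

end Bounds
section Bound2
variable {p q r : ℕ} {k : ℤ}

lemma bound2 (pp : p.Prime) (qq : q.Prime) (hplt : p < q)
    (hp3 : (3:ℤ) ≤ p) (hq3 : (4:ℤ) ≤ q)
    (hk : (r:ℤ) + 1 = k * ((p:ℤ)*(q:ℤ))) (hk1 : 1 ≤ k)
    {n : ℤ} (hn : 0 ≤ n) (hD : n ≤ ((p:ℤ)-1)*((q:ℤ)-1)*((r:ℤ)-1) - 1) :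
    |∑ t ∈ Finset.range p, (Wf p q r (-1) (n - t) - Wf p q r (-1) (n - q - t))| ≤ 1 := by
  have hpq' : (p:ℤ) < q := by exact_mod_cast hplt
  have hw : (0:ℤ) < (p:ℤ)*(q:ℤ) := by positivity
  have hd : ((p:ℤ)-1)*((q:ℤ)-1) = (p:ℤ)*(q:ℤ) - p - q + 1 := by ring
  have h6 : (6:ℤ) ≤ ((p:ℤ)-1)*((q:ℤ)-1) := by nlinarith
  have hqw : (q:ℤ) + 8 ≤ (p:ℤ)*(q:ℤ) := by nlinarith
  have hβ0 : 0 ≤ n / ((p:ℤ)*(q:ℤ)) := Int.ediv_nonneg hn hw.le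
  have hβeq := Int.mul_ediv_add_emod n ((p:ℤ)*(q:ℤ))
  have hγeq := Int.mul_ediv_add_emod (-n) ((p:ℤ)*(q:ℤ))
  have hμ0 : 0 ≤ (-n) % ((p:ℤ)*(q:ℤ)) := Int.emod_nonneg _ (ne_of_gt hw)
  have hμw : (-n) % ((p:ℤ)*(q:ℤ)) < (p:ℤ)*(q:ℤ) := Int.emod_lt_of_pos _ hw
  have hν0 : 0 ≤ n % ((p:ℤ)*(q:ℤ)) := Int.emod_nonneg _ (ne_of_gt hw)
  have hνw : n % ((p:ℤ)*(q:ℤ)) < (p:ℤ)*(q:ℤ) := Int.emod_lt_of_pos _ hw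
  have hM1 := Mbound2 pp qq hp3 hq3 hk hk1 hD
  have hM10 : 0 ≤ (n / ((p:ℤ)*(q:ℤ)) + 1)/k := Int.ediv_nonneg (by omega) (by omega)
  have hM20 : 0 ≤ (n / ((p:ℤ)*(q:ℤ)))/k := Int.ediv_nonneg hβ0 (by omega)
  have hM2M : (n / ((p:ℤ)*(q:ℤ)))/k ≤ (n / ((p:ℤ)*(q:ℤ)) + 1)/k :=
    Int.ediv_le_ediv (by omega) (by omega)
  rw [Finset.sum_sub_distrib]
  rcases lt_or_ge n (q:ℤ) with hnq | hnq
  · -- n < q : second sum vanishes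
    have hz : ∑ t ∈ Finset.range p, Wf p q r (-1) (n - q - t) = 0 :=
      Finset.sum_eq_zero fun t _ => Wf_neg (by
        have := Int.natCast_nonneg t; omega)
    rw [hz, sub_zero]
    exact sumW2_bound pp qq hk hk1 hn hM1
  · -- q ≤ n
    have hn' : (0:ℤ) ≤ n - q := by omega
    have hM1' := Mbound2 pp qq hp3 hq3 hk hk1 (show n - q ≤ _ - 1 by omega)
    rcases eq_or_lt_of_le hμ0 with hμz | hμ1
    · -- case (i) : μ = 0
      have hμz' : (-n) % ((p:ℤ)*(q:ℤ)) = 0 := hμz.symm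
      have hnn : n / ((p:ℤ)*(q:ℤ)) = -((-n) / ((p:ℤ)*(q:ℤ))) ∧ n % ((p:ℤ)*(q:ℤ)) = 0 := by
        apply (Int.ediv_emod_unique hw).2
        exact ⟨by linarith [hμz'], by omega, by omega⟩
      have hdmq : (n - q) / ((p:ℤ)*(q:ℤ)) = n / ((p:ℤ)*(q:ℤ)) - 1
          ∧ (n - q) % ((p:ℤ)*(q:ℤ)) = (p:ℤ)*(q:ℤ) - q := by
        apply (Int.ediv_emod_unique hw).2
        exact ⟨by linarith [hnn.2], by linarith, by linarith⟩
      have hmq : (-(n - (q:ℤ))) / ((p:ℤ)*(q:ℤ)) = (-n) / ((p:ℤ)*(q:ℤ))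
          ∧ (-(n - (q:ℤ))) % ((p:ℤ)*(q:ℤ)) = (q:ℤ) := by
        apply (Int.ediv_emod_unique hw).2
        exact ⟨by linarith [hμz'], by linarith, by linarith⟩
      rw [sumW2a pp qq hk hk1 hn hμz']
      rw [sumW2b pp qq hk hk1 hn' (by rw [hmq.2]; linarith)
        (by rw [hmq.2]; linarith)]
      rw [hmq.2, hdmq.1, show n / ((p:ℤ)*(q:ℤ)) - 1 + 1 = n / ((p:ℤ)*(q:ℤ)) by ring]
      have h4 := main4 pp qq hplt hM20 (show (p:ℤ) + q - 1 < (p:ℤ)*(q:ℤ) by linarith)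
      have hA : Tf p q ((n / ((p:ℤ)*(q:ℤ)))/k) ((p:ℤ) + q - 1 - p)
          = Tf p q ((n / ((p:ℤ)*(q:ℤ)))/k) ((q:ℤ) - 1) := by congr 1; ring
      have hB : Tf p q ((n / ((p:ℤ)*(q:ℤ)))/k) ((p:ℤ) + q - 1 - q)
          = Tf p q ((n / ((p:ℤ)*(q:ℤ)))/k) ((p:ℤ) - 1) := by congr 1; ring
      have hC : Tf p q ((n / ((p:ℤ)*(q:ℤ)))/k) ((p:ℤ) + q - 1 - p - q) = 0 := by
        unfold Tf
        rw [min_eq_left (by linarith), gf_neg (by linarith)]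
      have hX : Tf p q ((n / ((p:ℤ)*(q:ℤ)))/k) ((q:ℤ) + p - 1)
          = Tf p q ((n / ((p:ℤ)*(q:ℤ)))/k) ((p:ℤ) + q - 1) := by congr 1; ring
      rw [hA, hB, hC] at h4
      rw [hX]
      rw [abs_le] at h4 ⊢
      constructor <;> linarith [h4.1, h4.2]
    · -- μ ≥ 1
      have hnw : n % ((p:ℤ)*(q:ℤ)) = (p:ℤ)*(q:ℤ) - (-n) % ((p:ℤ)*(q:ℤ)) := by
        have := (Int.ediv_emod_unique hw).2
          (⟨by linarith, by linarith, by linarith⟩ :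
            ((p:ℤ)*(q:ℤ) - (-n) % ((p:ℤ)*(q:ℤ)))
                + ((p:ℤ)*(q:ℤ)) * (-((-n) / ((p:ℤ)*(q:ℤ))) - 1) = n
              ∧ _ ∧ _)
        exact this.2
      rcases le_or_gt ((-n) % ((p:ℤ)*(q:ℤ))) ((p:ℤ)*(q:ℤ) - p - q) with hμd | hμd
      · -- case (ii)
        have hdmq : (n - q) / ((p:ℤ)*(q:ℤ)) = n / ((p:ℤ)*(q:ℤ)) := by
          have := (Int.ediv_emod_unique hw).2
            (⟨by linarith, by linarith, by linarith⟩ :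
              ((p:ℤ)*(q:ℤ) - (-n) % ((p:ℤ)*(q:ℤ)) - q)
                  + ((p:ℤ)*(q:ℤ)) * (n / ((p:ℤ)*(q:ℤ))) = n - q
                ∧ _ ∧ _)
          exact this.1
        have hmq : (-(n - (q:ℤ))) / ((p:ℤ)*(q:ℤ)) = (-n) / ((p:ℤ)*(q:ℤ))
            ∧ (-(n - (q:ℤ))) % ((p:ℤ)*(q:ℤ)) = (-n) % ((p:ℤ)*(q:ℤ)) + q := by
          apply (Int.ediv_emod_unique hw).2
          exact ⟨by linarith, by linarith, by linarith⟩
        rw [sumW2b pp qq hk hk1 hn (by omega) (by linarith)]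
        rw [sumW2b pp qq hk hk1 hn' (by rw [hmq.2]; linarith)
          (by rw [hmq.2]; linarith)]
        rw [hmq.2, hdmq]
        set M := (n / ((p:ℤ)*(q:ℤ)) + 1)/k with hMdef
        set μ := (-n) % ((p:ℤ)*(q:ℤ)) with hμdef
        have h4 := main4 pp qq hplt hM10 (show μ + p + q - 1 < (p:ℤ)*(q:ℤ) by linarith)
        have hA : Tf p q M (μ + p + q - 1 - p) = Tf p q M (μ + q - 1) := by congr 1; ring
        have hB : Tf p q M (μ + p + q - 1 - q) = Tf p q M (μ + p - 1) := by congr 1; ring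
        have hC : Tf p q M (μ + p + q - 1 - p - q) = Tf p q M (μ - 1) := by congr 1; ring
        have hX : Tf p q M (μ + q + p - 1) = Tf p q M (μ + p + q - 1) := by congr 1; ring
        rw [hA, hB, hC] at h4
        rw [hX]
        rw [abs_le] at h4 ⊢
        constructor <;> linarith [h4.1, h4.2]
      · rcases le_or_gt ((-n) % ((p:ℤ)*(q:ℤ)) + p) ((p:ℤ)*(q:ℤ)) with hμp | hμp
        · -- case (iii) : SA = 0
          rw [sumW2b pp qq hk hk1 hn (by omega) hμp]
          have hSA : Tf p q ((n / ((p:ℤ)*(q:ℤ)) + 1)/k) ((-n) % ((p:ℤ)*(q:ℤ)) + p - 1)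
              - Tf p q ((n / ((p:ℤ)*(q:ℤ)) + 1)/k) ((-n) % ((p:ℤ)*(q:ℤ)) - 1) = 0 := by
            unfold Tf
            rw [min_eq_right (by linarith), min_eq_right (by linarith)]
            ring
          rw [hSA, zero_sub, abs_neg]
          exact sumW2_bound pp qq hk hk1 hn' hM1'
        · -- case (iv) : SA wraps
          rw [sumW2c pp qq hk hk1 hn (by omega) hμp hM1]
          have hdmq : (n - q) / ((p:ℤ)*(q:ℤ)) = n / ((p:ℤ)*(q:ℤ)) - 1 := by
            have := (Int.ediv_emod_unique hw).2
              (⟨by linarith, by linarith, by linarith⟩ :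
                (2*((p:ℤ)*(q:ℤ)) - (-n) % ((p:ℤ)*(q:ℤ)) - q)
                    + ((p:ℤ)*(q:ℤ)) * (n / ((p:ℤ)*(q:ℤ)) - 1) = n - q
                  ∧ _ ∧ _)
            exact this.1
          have hmq : (-(n - (q:ℤ))) / ((p:ℤ)*(q:ℤ)) = (-n) / ((p:ℤ)*(q:ℤ)) + 1
              ∧ (-(n - (q:ℤ))) % ((p:ℤ)*(q:ℤ))
                = (-n) % ((p:ℤ)*(q:ℤ)) + q - (p:ℤ)*(q:ℤ) := by
            apply (Int.ediv_emod_unique hw).2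
            exact ⟨by linarith, by linarith, by linarith⟩
          rw [sumW2b pp qq hk hk1 hn' (by rw [hmq.2]; linarith)
            (by rw [hmq.2]; linarith)]
          rw [hmq.2, hdmq, show n / ((p:ℤ)*(q:ℤ)) - 1 + 1 = n / ((p:ℤ)*(q:ℤ)) by ring]
          set M := (n / ((p:ℤ)*(q:ℤ)))/k with hMdef
          set μ := (-n) % ((p:ℤ)*(q:ℤ)) with hμdef
          have h4 := main4 pp qq hplt hM20
            (show μ + q - (p:ℤ)*(q:ℤ) + p - 1 < (p:ℤ)*(q:ℤ) by linarith)
          have hA : Tf p q M (μ + q - (p:ℤ)*(q:ℤ) + p - 1 - p)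
              = Tf p q M (μ + q - (p:ℤ)*(q:ℤ) - 1) := by congr 1; ring
          have hB : Tf p q M (μ + q - (p:ℤ)*(q:ℤ) + p - 1 - q)
              = Tf p q M (μ + p - 1 - (p:ℤ)*(q:ℤ)) := by congr 1; ring
          have hC : Tf p q M (μ + q - (p:ℤ)*(q:ℤ) + p - 1 - p - q) = 0 := by
            unfold Tf
            rw [min_eq_left (by linarith), gf_neg (by linarith)]
          rw [hA, hB, hC] at h4
          rw [abs_le] at h4 ⊢
          constructor <;> linarith [h4.1, h4.2]

end Bound2

noncomputable def cycHeight (f : Polynomial ℤ) : ℕ :=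
  f.support.sup fun m => (f.coeff m).natAbs
section Final

lemma height_one {p q r : ℕ} (pp : p.Prime) (qq : q.Prime) (rr : r.Prime)
    (hpq : p ≠ q) (hrp : r ≠ p) (hrq : r ≠ q)
    (hb : ∀ n : ℕ, (n:ℤ) ≤ ((p:ℤ)-1)*((q:ℤ)-1)*((r:ℤ)-1) - 1
      → |(cyclotomic (p*q*r) ℤ).coeff n| ≤ 1) :
    cycHeight (cyclotomic (p*q*r) ℤ) = 1 := by
  have hco1 : Nat.Coprime p q := (Nat.coprime_primes pp qq).2 hpq
  have hco2 : Nat.Coprime (p*q) r :=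
    Nat.Coprime.mul ((Nat.coprime_primes pp rr).2 (Ne.symm hrp))
      ((Nat.coprime_primes qq rr).2 (Ne.symm hrq))
  have hdeg : (cyclotomic (p*q*r) ℤ).natDegree = (p-1)*(q-1)*(r-1) := by
    rw [natDegree_cyclotomic, Nat.totient_mul hco2, Nat.totient_mul hco1,
      Nat.totient_prime pp, Nat.totient_prime qq, Nat.totient_prime rr]
  have hmon : (cyclotomic (p*q*r) ℤ).Monic := cyclotomic.monic _ ℤ
  have hcast : (((p-1)*(q-1)*(r-1) : ℕ):ℤ)
      = ((p:ℤ)-1)*((q:ℤ)-1)*((r:ℤ)-1) := by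
    rw [Nat.cast_mul, Nat.cast_mul, Nat.cast_sub pp.one_le, Nat.cast_sub qq.one_le,
      Nat.cast_sub rr.one_le, Nat.cast_one]
  unfold cycHeight
  apply le_antisymm
  · apply Finset.sup_le
    intro b hbs
    have hble : b ≤ (cyclotomic (p*q*r) ℤ).natDegree := le_natDegree_of_mem_supp b hbs
    rcases eq_or_lt_of_le hble with heq | hlt
    · rw [heq, hmon.coeff_natDegree]
      norm_num
    · have hblt : b < (p-1)*(q-1)*(r-1) := by omega
      have hbz : (b:ℤ) ≤ ((p:ℤ)-1)*((q:ℤ)-1)*((r:ℤ)-1) - 1 := by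
        have h1 : (b:ℤ) < (((p-1)*(q-1)*(r-1) : ℕ):ℤ) := by exact_mod_cast hblt
        omega
      have h2 := hb b hbz
      rw [abs_le] at h2
      omega
  · have hmem : (cyclotomic (p*q*r) ℤ).natDegree ∈ (cyclotomic (p*q*r) ℤ).support := by
      rw [Polynomial.mem_support_iff, hmon.coeff_natDegree]
      exact one_ne_zero
    have := Finset.le_sup (f := fun m => ((cyclotomic (p*q*r) ℤ).coeff m).natAbs) hmem
    simpa [hmon.coeff_natDegree] using this

theorem kaplan_aux (p q r : ℕ) (hp : p.Prime) (hq : q.Prime) (hr : r.Prime)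
    (hpo : Odd p) (hqo : Odd q) (hplt : p < q) (hrp : r ≠ p) (hrq : r ≠ q)
    (hcong : r ≡ 1 [MOD p * q] ∨ (r : ℤ) ≡ -1 [ZMOD (p * q : ℕ)]) :
    cycHeight (cyclotomic (p*q*r) ℤ) = 1 := by
  have hpq : p ≠ q := Nat.ne_of_lt hplt
  have hp2 : p ≠ 2 := by rintro rfl; simp [Nat.odd_iff] at hpo
  have hp3 : (3:ℤ) ≤ p := by
    have := hp.two_le
    have h1 : 3 ≤ p := by omega
    exact_mod_cast h1
  have hq3 : (4:ℤ) ≤ q := by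
    have := hp.two_le
    have h1 : 4 ≤ q := by omega
    exact_mod_cast h1
  have hw : (0:ℤ) < (p:ℤ)*(q:ℤ) := by positivity
  have hr2 : (2:ℤ) ≤ r := by exact_mod_cast hr.two_le
  rcases hcong with hc | hc
  · -- r ≡ 1 (mod pq)
    have hdvd : ((p:ℤ)*(q:ℤ)) ∣ ((r:ℤ) - 1) := by
      have h1 : ((p*q : ℕ):ℤ) ∣ ((1:ℤ) - r) := by
        have := hc.dvd
        exact_mod_cast this
      have h2 : ((p*q : ℕ):ℤ) = (p:ℤ)*(q:ℤ) := by push_cast; ring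
      rw [h2] at h1
      have h3 := dvd_neg.2 h1
      rwa [neg_sub] at h3
    obtain ⟨k, hk'⟩ := hdvd
    have hk : (r:ℤ) - 1 = k * ((p:ℤ)*(q:ℤ)) := by rw [hk']; ring
    have hk1 : 1 ≤ k := by
      rcases le_or_gt 1 k with h | h
      · exact h
      · exfalso
        have hk0 : k ≤ 0 := by omega
        have : k * ((p:ℤ)*(q:ℤ)) ≤ 0 := mul_nonpos_of_nonpos_of_nonneg hk0 hw.le
        omega
    apply height_one hp hq hr hpq hrp hrq
    intro n hn
    rw [claimA hp hq hr hpq hrp hrq (⟨k, by linarith [hk]⟩ : ((p:ℤ)*(q:ℤ)) ∣ ((r:ℤ) - 1))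
      (Or.inl rfl) n]
    exact bound1 hp hq hplt hk hk1 (Int.natCast_nonneg n) hn
  · -- r ≡ -1 (mod pq)
    have hdvd : ((p:ℤ)*(q:ℤ)) ∣ ((r:ℤ) + 1) := by
      have h1 : ((p*q : ℕ):ℤ) ∣ ((-1:ℤ) - r) := hc.dvd
      have h2 : ((p*q : ℕ):ℤ) = (p:ℤ)*(q:ℤ) := by push_cast; ring
      rw [h2] at h1
      have h3 : (-1:ℤ) - r = -((r:ℤ) + 1) := by ring
      rw [h3] at h1
      exact (dvd_neg.1 h1)
    obtain ⟨k, hk'⟩ := hdvd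
    have hk : (r:ℤ) + 1 = k * ((p:ℤ)*(q:ℤ)) := by rw [hk']; ring
    have hk1 : 1 ≤ k := by
      rcases le_or_gt 1 k with h | h
      · exact h
      · exfalso
        have hk0 : k ≤ 0 := by omega
        have : k * ((p:ℤ)*(q:ℤ)) ≤ 0 := mul_nonpos_of_nonpos_of_nonneg hk0 hw.le
        omega
    apply height_one hp hq hr hpq hrp hrq
    intro n hn
    have hdvd2 : ((p:ℤ)*(q:ℤ)) ∣ ((r:ℤ) - (-1)) := ⟨k, by linarith [hk]⟩
    rw [claimA hp hq hr hpq hrp hrq hdvd2 (Or.inr rfl) n]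
    exact bound2 hp hq hplt hp3 hq3 hk hk1 (Int.natCast_nonneg n) hn

end Final

theorem stmt10 (p q r : ℕ) (hp : p.Prime) (hq : q.Prime) (hr : r.Prime)
    (hpo : Odd p) (hqo : Odd q) (hpq : p ≠ q) (hrp : r ≠ p) (hrq : r ≠ q)
    (hcong : r ≡ 1 [MOD p * q] ∨ (r : ℤ) ≡ -1 [ZMOD (p * q : ℕ)]) :
    cycHeight (Polynomial.cyclotomic (p * q * r) ℤ) = 1 := by
  rcases Nat.lt_or_ge p q with h | h
  · exact kaplan_aux p q r hp hq hr hpo hqo h hrp hrq hcong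
  · have hqp : q < p := by omega
    have hcomm : p * q * r = q * p * r := by rw [mul_comm p q]
    rw [hcomm]
    apply kaplan_aux q p r hq hp hr hqo hpo hqp hrq hrp
    rcases hcong with h1 | h1
    · left; rwa [mul_comm p q] at h1
    · right; rwa [mul_comm p q] at h1
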